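/- arXiv:1208.3865 — 3 statements merged into one kernel-verified Lean document; each statement's English description precedes it below -/
import Mathlib

section
/- Let V be an affine ℝ-variety, let K ⊆ V(ℝ) be a basic closed semialgebraic set that is Zariski dense in V, and assume that the saturated preordering 𝒫(K) in ℝ[V] is finitely generated. Then the following are equivalent: (i) for every n ∈ ℕ and every morphism φ : V → 𝔸ⁿ of ℝ-varieties, the moment relaxation for the closed convex hull of φ(K) becomes exact, i.e., the closure of conv(φ(K)) equals the closure of K_W for some choice of finite-dimensional subspaces W = (W₀, …, W_r); (ii) the preordering 𝒫(K) in ℝ[V] is stable. -/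
section MomentRelaxation

variable {A : Type} [CommRing A] [Algebra ℝ A]

/-- `a` is a sum of squares of elements of the subspace `W ⊆ A`. -/
def IsSumSqFrom (W : Submodule ℝ A) (a : A) : Prop :=
  ∃ (N : ℕ) (w : Fin N → A), (∀ j, w j ∈ W) ∧ a = ∑ j, w j * w j

/-- The truncated quadratic module `M_W = Σ_{W₀}·h₀ + Σ_{W₁}·h₁ + ⋯ + Σ_{W_r}·h_r`. -/
def truncQuadModule {r : ℕ} (h : Fin (r+1) → A) (W : Fin (r+1) → Submodule ℝ A) : Set A :=
  {f | ∃ σ : Fin (r+1) → A, (∀ i, IsSumSqFrom (W i) (σ i)) ∧ f = ∑ i, σ i * h i}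

/-- The quadratic module `M = Σ_A·h₀ + ⋯ + Σ_A·h_r` generated by `h₀, …, h_r`. -/
def quadModule {r : ℕ} (h : Fin (r+1) → A) : Set A :=
  truncQuadModule h (fun _ => (⊤ : Submodule ℝ A))

/-- The linear subspace `U = h₀·W₀W₀ + h₁·W₁W₁ + ⋯ + h_r·W_rW_r` of `A`
(recall `h 0 = 1`). -/
def relaxSpace {r : ℕ} (h : Fin (r+1) → A) (W : Fin (r+1) → Submodule ℝ A) :
    Submodule ℝ A :=
  Submodule.span ℝ {a | ∃ i, ∃ u ∈ W i, ∃ v ∈ W i, a = h i * (u * v)}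

/-- The relaxation `K_W ⊆ ℝⁿ`: the image, under the restriction map `ρ : U′ → L′` (encoded
via the coordinates `λ ↦ (λ(x₁), …, λ(x_n))`), of the set of linear functionals
`λ ∈ U′` that are nonnegative on `M_W` and satisfy `λ(1) = 1`. -/
def relaxSet {n r : ℕ} (x : Fin n → A) (h : Fin (r+1) → A)
    (W : Fin (r+1) → Submodule ℝ A)
    (h1 : (1:A) ∈ relaxSpace h W) (hx : ∀ i, x i ∈ relaxSpace h W) :
    Set (Fin n → ℝ) :=
  {η | ∃ lam : Module.Dual ℝ ↥(relaxSpace h W),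
    (∀ g : ↥(relaxSpace h W), (g : A) ∈ truncQuadModule h W → 0 ≤ lam g) ∧
    lam ⟨1, h1⟩ = 1 ∧ ∀ i, η i = lam ⟨x i, hx i⟩}

end MomentRelaxation

namespace MomentAux

variable {A : Type} [CommRing A] [Algebra ℝ A]

lemma sum_single_smul {q : ℕ} (c : Fin q → ℝ) :
    (∑ t, c t • Pi.single (M := fun _ => ℝ) t 1) = c := by
  funext j
  simp [Finset.sum_apply, Pi.single_apply]

lemma isSumSqFrom_zero (W : Submodule ℝ A) : IsSumSqFrom W 0 :=
  ⟨0, fun j => j.elim0, fun j => j.elim0, by simp⟩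

lemma isSumSqFrom_sq {W : Submodule ℝ A} {w : A} (hw : w ∈ W) : IsSumSqFrom W (w * w) :=
  ⟨1, fun _ => w, fun _ => hw, by simp⟩

lemma _root_.IsSumSqFrom.add {W : Submodule ℝ A} {a b : A}
    (ha : IsSumSqFrom W a) (hb : IsSumSqFrom W b) : IsSumSqFrom W (a + b) := by
  obtain ⟨N, w, hw, rfl⟩ := ha
  obtain ⟨M, v, hv, rfl⟩ := hb
  refine ⟨N + M, Fin.append w v, ?_, ?_⟩
  · intro j
    refine Fin.addCases (fun i => ?_) (fun i => ?_) j
    · rw [Fin.append_left]; exact hw i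
    · rw [Fin.append_right]; exact hv i
  · rw [Fin.sum_univ_add]
    simp [Fin.append_left, Fin.append_right]

lemma _root_.IsSumSqFrom.smul {W : Submodule ℝ A} {a : A} {t : ℝ} (ht : 0 ≤ t)
    (ha : IsSumSqFrom W a) : IsSumSqFrom W (t • a) := by
  obtain ⟨N, w, hw, rfl⟩ := ha
  refine ⟨N, fun j => Real.sqrt t • w j, fun j => W.smul_mem _ (hw j), ?_⟩
  rw [Finset.smul_sum]
  refine Finset.sum_congr rfl fun j _ => ?_
  rw [smul_mul_smul_comm, Real.mul_self_sqrt ht]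

lemma _root_.IsSumSqFrom.mono {W W' : Submodule ℝ A} (hWW : W ≤ W') {a : A}
    (ha : IsSumSqFrom W a) : IsSumSqFrom W' a := by
  obtain ⟨N, w, hw, rfl⟩ := ha
  exact ⟨N, w, fun j => hWW (hw j), rfl⟩

end MomentAux

namespace MomentAux

variable {A : Type} [CommRing A] [Algebra ℝ A] {r : ℕ}

lemma trunc_zero (h : Fin (r+1) → A) (W : Fin (r+1) → Submodule ℝ A) :
    (0:A) ∈ truncQuadModule h W :=
  ⟨fun _ => 0, fun i => isSumSqFrom_zero _, by simp⟩

lemma trunc_add {h : Fin (r+1) → A} {W : Fin (r+1) → Submodule ℝ A} {a b : A}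
    (ha : a ∈ truncQuadModule h W) (hb : b ∈ truncQuadModule h W) :
    a + b ∈ truncQuadModule h W := by
  obtain ⟨σ, hσ, rfl⟩ := ha
  obtain ⟨τ, hτ, rfl⟩ := hb
  exact ⟨fun i => σ i + τ i, fun i => (hσ i).add (hτ i), by
    rw [← Finset.sum_add_distrib]; exact Finset.sum_congr rfl fun i _ => (add_mul _ _ _).symm⟩

lemma trunc_smul {h : Fin (r+1) → A} {W : Fin (r+1) → Submodule ℝ A} {a : A} {t : ℝ}
    (ht : 0 ≤ t) (ha : a ∈ truncQuadModule h W) : t • a ∈ truncQuadModule h W := by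
  obtain ⟨σ, hσ, rfl⟩ := ha
  exact ⟨fun i => t • σ i, fun i => (hσ i).smul ht, by
    rw [Finset.smul_sum]; exact Finset.sum_congr rfl fun i _ => (smul_mul_assoc _ _ _).symm⟩

lemma trunc_mono {h : Fin (r+1) → A} {W W' : Fin (r+1) → Submodule ℝ A}
    (hWW : ∀ i, W i ≤ W' i) : truncQuadModule h W ⊆ truncQuadModule h W' := by
  rintro f ⟨σ, hσ, rfl⟩
  exact ⟨σ, fun i => (hσ i).mono (hWW i), rfl⟩

lemma trunc_one {h : Fin (r+1) → A} (h0 : h 0 = 1) {W : Fin (r+1) → Submodule ℝ A}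
    (h1W : (1:A) ∈ W 0) : (1:A) ∈ truncQuadModule h W := by
  refine ⟨fun i => if i = 0 then 1 else 0, fun i => ?_, ?_⟩
  · rcases eq_or_ne i 0 with hi | hi
    · simp only [hi, if_pos]; subst hi; simpa using isSumSqFrom_sq h1W
    · simp only [if_neg hi]; exact isSumSqFrom_zero _
  · rw [Finset.sum_eq_single 0]
    · simp [h0]
    · intro i _ hi; simp [hi]
    · intro hmem; exact absurd (Finset.mem_univ _) hmem

lemma trunc_eval_nonneg {h : Fin (r+1) → A} {W : Fin (r+1) → Submodule ℝ A}
    (ξ : A →ₐ[ℝ] ℝ) (hξ : ∀ i, 0 ≤ ξ (h i)) {g : A} (hg : g ∈ truncQuadModule h W) :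
    0 ≤ ξ g := by
  obtain ⟨σ, hσ, rfl⟩ := hg
  rw [map_sum]
  refine Finset.sum_nonneg fun i _ => ?_
  rw [map_mul]
  refine mul_nonneg ?_ (hξ i)
  obtain ⟨N, w, hw, hws⟩ := hσ i
  rw [hws, map_sum]
  exact Finset.sum_nonneg fun j _ => by rw [map_mul]; exact mul_self_nonneg _

lemma mem_relaxSpace_gen {h : Fin (r+1) → A} {W : Fin (r+1) → Submodule ℝ A}
    {i : Fin (r+1)} {u v : A} (hu : u ∈ W i) (hv : v ∈ W i) :
    h i * (u * v) ∈ relaxSpace h W :=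
  Submodule.subset_span ⟨i, u, hu, v, hv, rfl⟩

lemma trunc_subset_relaxSpace {h : Fin (r+1) → A} {W : Fin (r+1) → Submodule ℝ A}
    {g : A} (hg : g ∈ truncQuadModule h W) : g ∈ relaxSpace h W := by
  obtain ⟨σ, hσ, rfl⟩ := hg
  refine Submodule.sum_mem _ fun i _ => ?_
  obtain ⟨N, w, hw, hws⟩ := hσ i
  rw [hws, Finset.sum_mul]
  refine Submodule.sum_mem _ fun j _ => ?_
  rw [mul_comm]
  exact mem_relaxSpace_gen (hw j) (hw j)

lemma relaxSpace_mono {h : Fin (r+1) → A} {W W' : Fin (r+1) → Submodule ℝ A}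
    (hWW : ∀ i, W i ≤ W' i) : relaxSpace h W ≤ relaxSpace h W' := by
  refine Submodule.span_mono ?_
  rintro a ⟨i, u, hu, v, hv, rfl⟩
  exact ⟨i, u, hWW i hu, v, hWW i hv, rfl⟩

end MomentAux

namespace MomentAux

variable {A : Type} [CommRing A] [Algebra ℝ A] {r n : ℕ}

lemma relaxSet_convex (x : Fin n → A) (h : Fin (r+1) → A) (W : Fin (r+1) → Submodule ℝ A)
    (h1 : (1:A) ∈ relaxSpace h W) (hx : ∀ i, x i ∈ relaxSpace h W) :
    Convex ℝ (relaxSet x h W h1 hx) := by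
  rintro η ⟨lam, hnn, hone, hco⟩ η' ⟨lam', hnn', hone', hco'⟩ a b ha hb hab
  refine ⟨a • lam + b • lam', fun g hg => ?_, ?_, fun i => ?_⟩
  · simp only [LinearMap.add_apply, LinearMap.smul_apply, smul_eq_mul]
    exact add_nonneg (mul_nonneg ha (hnn g hg)) (mul_nonneg hb (hnn' g hg))
  · simp only [LinearMap.add_apply, LinearMap.smul_apply, smul_eq_mul, hone, hone']
    linarith
  · simp only [Pi.add_apply, Pi.smul_apply, smul_eq_mul, LinearMap.add_apply,
      LinearMap.smul_apply, hco i, hco' i]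

lemma eval_mem_relaxSet {x : Fin n → A} {h : Fin (r+1) → A} {W : Fin (r+1) → Submodule ℝ A}
    {h1 : (1:A) ∈ relaxSpace h W} {hx : ∀ i, x i ∈ relaxSpace h W}
    {ξ : A →ₐ[ℝ] ℝ} (hξ : ∀ i, 0 ≤ ξ (h i)) :
    (fun i => ξ (x i)) ∈ relaxSet x h W h1 hx := by
  refine ⟨ξ.toLinearMap.comp (relaxSpace h W).subtype, fun g hg => ?_, ?_, fun i => rfl⟩
  · exact trunc_eval_nonneg ξ hξ hg
  · simp

lemma relaxSet_antitone {x : Fin n → A} {h : Fin (r+1) → A}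
    {W W' : Fin (r+1) → Submodule ℝ A} (hWW : ∀ i, W i ≤ W' i)
    {h1 : (1:A) ∈ relaxSpace h W} {hx : ∀ i, x i ∈ relaxSpace h W}
    {h1' : (1:A) ∈ relaxSpace h W'} {hx' : ∀ i, x i ∈ relaxSpace h W'} :
    relaxSet x h W' h1' hx' ⊆ relaxSet x h W h1 hx := by
  rintro η ⟨lam, hnn, hone, hco⟩
  refine ⟨lam.comp (Submodule.inclusion (relaxSpace_mono hWW)), fun g hg => ?_, ?_, fun i => ?_⟩
  · exact hnn _ (trunc_mono hWW hg)
  · exact hone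
  · exact hco i

end MomentAux

namespace MomentAux

variable {A : Type} [CommRing A] [Algebra ℝ A] {r : ℕ}

lemma apply_eq_sum_coord {n : ℕ} (f : (Fin n → ℝ) →L[ℝ] ℝ) (z : Fin n → ℝ) :
    f z = ∑ i, z i * f (Pi.single i 1) := by
  conv_lhs => rw [← sum_single_smul z]
  rw [map_sum]
  exact Finset.sum_congr rfl fun i _ => by rw [map_smul, smul_eq_mul]

lemma direction_ii_i (h : Fin (r+1) → A) (h0 : h 0 = 1)
    (K : Set (A →ₐ[ℝ] ℝ)) (hK : K = {ξ | ∀ i, 0 ≤ ξ (h i)})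
    (stab : ∀ L : Submodule ℝ A, FiniteDimensional ℝ ↥L →
        ∃ W : Fin (r+1) → Submodule ℝ A, (∀ i, FiniteDimensional ℝ ↥(W i)) ∧
          ∀ f : A, (∀ ξ ∈ K, 0 ≤ ξ f) → f ∈ L → f ∈ truncQuadModule h W)
    (n : ℕ) (x : Fin n → A) :
    ∃ W : Fin (r+1) → Submodule ℝ A, (∀ i, FiniteDimensional ℝ ↥(W i)) ∧
      ∃ (h1 : (1:A) ∈ relaxSpace h W) (hx : ∀ i, x i ∈ relaxSpace h W),
        closure (convexHull ℝ ((fun ξ : A →ₐ[ℝ] ℝ => fun i => ξ (x i)) '' K))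
          = closure (relaxSet x h W h1 hx) := by
  classical
  set L : Submodule ℝ A := Submodule.span ℝ (insert 1 (Set.range x)) with hLdef
  have hLfd : FiniteDimensional ℝ ↥L :=
    FiniteDimensional.span_of_finite ℝ ((Set.finite_range x).insert 1)
  obtain ⟨W'', hW''fd, hstab⟩ := stab L hLfd
  set W : Fin (r+1) → Submodule ℝ A := fun i => if i = 0 then W'' 0 ⊔ L else W'' i with hWdef
  have hWeq : ∀ i, W i = if i = 0 then W'' 0 ⊔ L else W'' i := fun i => rfl
  have hWle : ∀ i, W'' i ≤ W i := by
    intro i; rw [hWeq i]; split_ifs with hi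
    · subst hi; exact le_sup_left
    · exact le_rfl
  have hLW0 : L ≤ W 0 := by
    rw [hWeq 0, if_pos rfl]; exact le_sup_right
  have hWfd : ∀ i, FiniteDimensional ℝ ↥(W i) := by
    intro i
    haveI := hW''fd i
    haveI := hW''fd 0
    rcases eq_or_ne i 0 with hi | hi
    · rw [hWeq i, if_pos hi]; infer_instance
    · rw [hWeq i, if_neg hi]; exact hW''fd i
  have h1L : (1:A) ∈ L := Submodule.subset_span (Set.mem_insert _ _)
  have hxL : ∀ i, x i ∈ L := fun i =>
    Submodule.subset_span (Set.mem_insert_of_mem _ ⟨i, rfl⟩)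
  have h1 : (1:A) ∈ relaxSpace h W := by
    have : (1:A) = h 0 * (1 * 1) := by rw [h0]; ring
    rw [this]; exact mem_relaxSpace_gen (hLW0 h1L) (hLW0 h1L)
  have hx : ∀ i, x i ∈ relaxSpace h W := by
    intro i
    have : x i = h 0 * (x i * 1) := by rw [h0]; ring
    rw [this]; exact mem_relaxSpace_gen (hLW0 (hxL i)) (hLW0 h1L)
  have hLrelax : L ≤ relaxSpace h W := by
    rw [hLdef, Submodule.span_le]
    rintro a (rfl | ⟨i, rfl⟩)
    · exact h1
    · exact hx i
  refine ⟨W, hWfd, h1, hx, ?_⟩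
  refine Set.Subset.antisymm ?_ ?_
  · refine closure_mono (convexHull_min ?_ (relaxSet_convex x h W h1 hx))
    rintro η ⟨ξ, hξK, rfl⟩
    rw [hK] at hξK
    exact eval_mem_relaxSet hξK
  · intro y hy
    by_contra hyC
    obtain ⟨f, u, hfu, huy⟩ :=
      geometric_hahn_banach_closed_point ((convex_convexHull ℝ _).closure) isClosed_closure hyC
    set c : Fin n → ℝ := fun i => f (Pi.single i 1) with hcdef
    set g : A := algebraMap ℝ A u - ∑ i, c i • x i with hgdef
    have hgeval : ∀ ξ : A →ₐ[ℝ] ℝ, ξ g = u - f (fun i => ξ (x i)) := by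
      intro ξ
      rw [hgdef, map_sub, map_sum, AlgHom.commutes, apply_eq_sum_coord f]
      simp only [Algebra.algebraMap_self, RingHom.id_apply, map_smul, smul_eq_mul]
      congr 1
      exact Finset.sum_congr rfl fun i _ => mul_comm _ _
    have hgK : ∀ ξ ∈ K, 0 ≤ ξ g := by
      intro ξ hξ
      rw [hgeval ξ]
      have : (fun i => ξ (x i)) ∈ closure (convexHull ℝ
          ((fun ξ : A →ₐ[ℝ] ℝ => fun i => ξ (x i)) '' K)) :=
        subset_closure (subset_convexHull ℝ _ ⟨ξ, hξ, rfl⟩)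
      linarith [hfu _ this]
    have hgL : g ∈ L := by
      rw [hgdef, Algebra.algebraMap_eq_smul_one]
      exact Submodule.sub_mem _ (Submodule.smul_mem _ _ h1L)
        (Submodule.sum_mem _ fun i _ => Submodule.smul_mem _ _ (hxL i))
    have hgM : g ∈ truncQuadModule h W := trunc_mono hWle (hstab g hgK hgL)
    have hrelax_sub : relaxSet x h W h1 hx ⊆ {z | f z ≤ u} := by
      rintro η ⟨lam, hnn, hone, hco⟩
      have hsub : (⟨g, hLrelax hgL⟩ : ↥(relaxSpace h W))
          = u • ⟨1, h1⟩ - ∑ i, c i • ⟨x i, hx i⟩ := by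
        apply Subtype.ext
        simp [hgdef, Algebra.algebraMap_eq_smul_one]
      have h0le : 0 ≤ lam ⟨g, hLrelax hgL⟩ := hnn _ hgM
      rw [hsub, map_sub, map_smul, map_sum, hone] at h0le
      simp only [map_smul, smul_eq_mul, mul_one] at h0le
      have : f η = ∑ i, c i * η i := by
        rw [apply_eq_sum_coord f η]
        exact Finset.sum_congr rfl fun i _ => mul_comm _ _
      rw [Set.mem_setOf_eq, this]
      have : ∑ i, c i * η i = ∑ i, c i * lam ⟨x i, hx i⟩ :=
        Finset.sum_congr rfl fun i _ => by rw [hco i]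
      rw [this]
      linarith
    have : f y ≤ u := by
      have := closure_minimal hrelax_sub (isClosed_le f.continuous continuous_const) hy
      exact this
    linarith

end MomentAux

namespace MomentAux

variable {A : Type} [CommRing A] [Algebra ℝ A] {r : ℕ}

lemma sq_expand {N m : ℕ} (C : Matrix (Fin N) (Fin m) ℝ) (β : Fin m → A) :
    ∑ j, (∑ k, C j k • β k) * (∑ l, C j l • β l)
      = ∑ k, ∑ l, (C.conjTranspose * C) k l • (β k * β l) := by
  have hterm : ∀ j, (∑ k, C j k • β k) * (∑ l, C j l • β l)
      = ∑ k, ∑ l, (C j k * C j l) • (β k * β l) := by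
    intro j
    rw [Finset.sum_mul_sum]
    exact Finset.sum_congr rfl fun k _ =>
      Finset.sum_congr rfl fun l _ => smul_mul_smul_comm _ _ _ _
  rw [Finset.sum_congr rfl fun j _ => hterm j, Finset.sum_comm]
  refine Finset.sum_congr rfl fun k _ => ?_
  rw [Finset.sum_comm]
  refine Finset.sum_congr rfl fun l _ => ?_
  rw [← Finset.sum_smul]
  congr 1

lemma isSumSqFrom_bounded {W : Submodule ℝ A} [FiniteDimensional ℝ ↥W] {a : A}
    (ha : IsSumSqFrom W a) :
    ∃ w : Fin (Module.finrank ℝ ↥W) → A, (∀ j, w j ∈ W) ∧ a = ∑ j, w j * w j := by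
  classical
  obtain ⟨N, v, hv, rfl⟩ := ha
  set m := Module.finrank ℝ ↥W with hm
  let b : Module.Basis (Fin m) ℝ ↥W := Module.finBasis ℝ ↥W
  set β : Fin m → A := fun k => (b k : A) with hβ
  set C : Matrix (Fin N) (Fin m) ℝ := fun j k => b.repr ⟨v j, hv j⟩ k with hC
  have hvj : ∀ j, v j = ∑ k, C j k • β k := by
    intro j
    have hb := b.sum_repr ⟨v j, hv j⟩
    calc v j = ((⟨v j, hv j⟩ : ↥W) : A) := rfl
    _ = ((∑ k, C j k • b k : ↥W) : A) := by rw [hb]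
    _ = ∑ k, C j k • β k := by simp [hβ]
  have key : ∑ j, v j * v j
      = ∑ k, ∑ l, ((C.conjTranspose * C) k l) • (β k * β l) := by
    rw [Finset.sum_congr rfl fun j _ => by rw [hvj j]]
    exact sq_expand C β
  obtain ⟨B, hB⟩ : ∃ B : Matrix (Fin m) (Fin m) ℝ, C.conjTranspose * C = B.conjTranspose * B := by
    open scoped MatrixOrder in
    obtain ⟨B, hB⟩ := CStarAlgebra.nonneg_iff_eq_star_mul_self.mp
      (Matrix.posSemidef_conjTranspose_mul_self C).nonneg
    exact ⟨B, by rw [hB, Matrix.star_eq_conjTranspose]⟩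
  refine ⟨fun j => ∑ k, B j k • β k,
    fun j => Submodule.sum_mem _ fun k _ => Submodule.smul_mem _ _ (b k).2, ?_⟩
  rw [key, hB]
  exact (sq_expand B β).symm

end MomentAux

namespace MomentAux

variable {A : Type} [CommRing A] [Algebra ℝ A] {r : ℕ}

/-- The quadratic parametrization of the truncated quadratic module. -/
noncomputable def Phi (h : Fin (r+1) → A) (W : Fin (r+1) → Submodule ℝ A)
    (w : ∀ i, Fin (Module.finrank ℝ ↥(W i)) → ↥(W i)) : A :=
  ∑ i, h i * ∑ j, ((w i j : A) * (w i j : A))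

lemma Phi_mem_trunc (h : Fin (r+1) → A) (W : Fin (r+1) → Submodule ℝ A)
    (w : ∀ i, Fin (Module.finrank ℝ ↥(W i)) → ↥(W i)) :
    Phi h W w ∈ truncQuadModule h W := by
  refine ⟨fun i => ∑ j, ((w i j : A) * (w i j : A)),
    fun i => ⟨_, fun j => (w i j : A), fun j => (w i j).2, rfl⟩, ?_⟩
  exact Finset.sum_congr rfl fun i _ => (mul_comm _ _)

lemma trunc_eq_Phi (h : Fin (r+1) → A) (W : Fin (r+1) → Submodule ℝ A)
    (hWfd : ∀ i, FiniteDimensional ℝ ↥(W i)) {g : A} (hg : g ∈ truncQuadModule h W) :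
    ∃ w, g = Phi h W w := by
  obtain ⟨σ, hσ, rfl⟩ := hg
  have hch : ∀ i, ∃ w : Fin (Module.finrank ℝ ↥(W i)) → A,
      (∀ j, w j ∈ W i) ∧ σ i = ∑ j, w j * w j := fun i => by
    haveI := hWfd i
    exact isSumSqFrom_bounded (hσ i)
  choose v hvmem hvsum using hch
  refine ⟨fun i j => ⟨v i j, hvmem i j⟩, ?_⟩
  unfold Phi
  refine Finset.sum_congr rfl fun i _ => ?_
  rw [mul_comm, hvsum i]

lemma Phi_mem_relaxSpace (h : Fin (r+1) → A) (W : Fin (r+1) → Submodule ℝ A)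
    (w : ∀ i, Fin (Module.finrank ℝ ↥(W i)) → ↥(W i)) :
    Phi h W w ∈ relaxSpace h W := by
  refine Submodule.sum_mem _ fun i _ => ?_
  rw [Finset.mul_sum]
  exact Submodule.sum_mem _ fun j _ => mem_relaxSpace_gen (w i j).2 (w i j).2

lemma Phi_add_ann (h : Fin (r+1) → A) (W : Fin (r+1) → Submodule ℝ A)
    {w v : ∀ i, Fin (Module.finrank ℝ ↥(W i)) → ↥(W i)}
    (hann : ∀ i j, h i * (v i j : A) = 0) :
    Phi h W (w + v) = Phi h W w := by
  unfold Phi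
  refine Finset.sum_congr rfl fun i _ => ?_
  rw [Finset.mul_sum, Finset.mul_sum]
  refine Finset.sum_congr rfl fun j _ => ?_
  have hc : ((w + v) i j : A) = (w i j : A) + (v i j : A) := rfl
  rw [hc]
  linear_combination (2 * (w i j : A) + (v i j : A)) * hann i j

lemma Phi_smul (h : Fin (r+1) → A) (W : Fin (r+1) → Submodule ℝ A)
    (t : ℝ) (w : ∀ i, Fin (Module.finrank ℝ ↥(W i)) → ↥(W i)) :
    Phi h W (t • w) = (t * t) • Phi h W w := by
  unfold Phi
  rw [Finset.smul_sum]
  refine Finset.sum_congr rfl fun i _ => ?_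
  rw [Finset.mul_sum, Finset.mul_sum, Finset.smul_sum]
  refine Finset.sum_congr rfl fun j _ => ?_
  have hc : ((t • w) i j : A) = t • (w i j : A) := rfl
  rw [hc, smul_mul_smul_comm, mul_smul_comm]

lemma Phi_eq_zero_ann [IsReduced A] (h : Fin (r+1) → A) (W : Fin (r+1) → Submodule ℝ A)
    (K : Set (A →ₐ[ℝ] ℝ)) (hK : K = {ξ | ∀ i, 0 ≤ ξ (h i)})
    (hdense : ∀ f : A, (∀ ξ ∈ K, ξ f = 0) → f = 0)
    {w : ∀ i, Fin (Module.finrank ℝ ↥(W i)) → ↥(W i)}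
    (hPhi : Phi h W w = 0) : ∀ i, ∀ j, h i * (w i j : A) = 0 := by
  intro i j
  have hz : h i * ((w i j : A) * (w i j : A)) = 0 := by
    refine hdense _ fun ξ hξ => ?_
    have hξh : ∀ i', 0 ≤ ξ (h i') := by rw [hK] at hξ; exact hξ
    have hsum : ∑ i', ξ (h i') * ∑ j', (ξ (w i' j' : A)) * (ξ (w i' j' : A)) = 0 := by
      have := congrArg ξ hPhi
      rw [map_zero] at this
      rw [← this]
      unfold Phi
      rw [map_sum]
      exact Finset.sum_congr rfl fun i' _ => by rw [map_mul, map_sum]; simp [map_mul]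
    have hterm : ∀ i' ∈ Finset.univ, (0:ℝ) ≤ ξ (h i') * ∑ j', ξ (w i' j' : A) * ξ (w i' j' : A) :=
      fun i' _ => mul_nonneg (hξh i') (Finset.sum_nonneg fun j' _ => mul_self_nonneg _)
    have hi0 : ξ (h i) * ∑ j', ξ (w i j' : A) * ξ (w i j' : A) = 0 :=
      (Finset.sum_eq_zero_iff_of_nonneg hterm).mp hsum i (Finset.mem_univ i)
    rw [map_mul, map_mul]
    rcases mul_eq_zero.mp hi0 with hcase | hcase
    · rw [hcase, zero_mul]
    · have hsq : ξ (w i j : A) * ξ (w i j : A) = 0 :=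
        (Finset.sum_eq_zero_iff_of_nonneg (fun j' _ => mul_self_nonneg _)).mp hcase j
          (Finset.mem_univ j)
      rw [hsq, mul_zero]
  have hnil : (h i * (w i j : A)) * (h i * (w i j : A)) = 0 := by
    linear_combination (h i) * hz
  have : IsNilpotent (h i * (w i j : A)) := ⟨2, by rw [pow_two, hnil]⟩
  exact this.eq_zero

end MomentAux

namespace MomentAux

variable {A : Type} [CommRing A] [Algebra ℝ A] {r : ℕ}

lemma mul_expand {q : ℕ} (a : A) (c : Fin q → ℝ) (δ : Fin q → A) :
    a * ((∑ t, c t • δ t) * (∑ t', c t' • δ t'))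
      = ∑ t, ∑ t', (c t * c t') • (a * (δ t * δ t')) := by
  rw [Finset.sum_mul_sum, Finset.mul_sum]
  refine Finset.sum_congr rfl fun t _ => ?_
  rw [Finset.mul_sum]
  refine Finset.sum_congr rfl fun t' _ => ?_
  rw [smul_mul_smul_comm, mul_smul_comm]

set_option maxHeartbeats 1000000 in
lemma trunc_image_closed [IsReduced A]
    (h : Fin (r+1) → A) (K : Set (A →ₐ[ℝ] ℝ)) (hK : K = {ξ | ∀ i, 0 ≤ ξ (h i)})
    (hdense : ∀ f : A, (∀ ξ ∈ K, ξ f = 0) → f = 0)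
    (W : Fin (r+1) → Submodule ℝ A) (hWfd : ∀ i, FiniteDimensional ℝ ↥(W i))
    {d : ℕ} (e : ↥(relaxSpace h W) ≃ₗ[ℝ] (Fin d → ℝ)) :
    IsClosed ((fun g : ↥(relaxSpace h W) => e g) ''
      {g : ↥(relaxSpace h W) | (g : A) ∈ truncQuadModule h W}) := by
  classical
  haveI : ∀ i, FiniteDimensional ℝ ↥(W i) := hWfd
  -- the parameter space
  set D := ((i : Fin (r+1)) → Fin (Module.finrank ℝ ↥(W i)) → ↥(W i)) with hD
  haveI : FiniteDimensional ℝ D := by infer_instance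
  -- the annihilator subspace
  set N : Submodule ℝ D :=
    { carrier := {w | ∀ i j, h i * (w i j : A) = 0}
      add_mem' := by
        intro w v hw hv i j
        have : ((w + v) i j : A) = (w i j : A) + (v i j : A) := rfl
        rw [this, mul_add, hw i j, hv i j, add_zero]
      zero_mem' := by
        intro i j
        show h i * ((0 : ↥(W i)) : A) = 0
        rw [ZeroMemClass.coe_zero, mul_zero]
      smul_mem' := by
        intro t w hw i j
        have : ((t • w) i j : A) = t • (w i j : A) := rfl
        rw [this, mul_smul_comm, hw i j, smul_zero] } with hN
  obtain ⟨P, hPcompl⟩ := Submodule.exists_isCompl N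
  haveI : FiniteDimensional ℝ ↥P := inferInstance
  haveI : Module.Free ℝ ↥P := by exact Module.Free.of_divisionRing ℝ ↥P
  set q := Module.finrank ℝ ↥P with hq
  set eP : ↥P ≃ₗ[ℝ] (Fin q → ℝ) := (Module.finBasis ℝ ↥P).equivFun with heP
  set Θ : (Fin q → ℝ) →ₗ[ℝ] D := P.subtype ∘ₗ (eP.symm : (Fin q → ℝ) →ₗ[ℝ] ↥P) with hΘ
  set ψ : (Fin q → ℝ) → (Fin d → ℝ) :=
    fun c => e ⟨Phi h W (Θ c), Phi_mem_relaxSpace h W (Θ c)⟩ with hψ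
  -- the image is the range of ψ
  have hrange : ((fun g : ↥(relaxSpace h W) => e g) ''
      {g : ↥(relaxSpace h W) | (g : A) ∈ truncQuadModule h W}) = Set.range ψ := by
    apply Set.Subset.antisymm
    · rintro - ⟨g, hg, rfl⟩
      obtain ⟨w, hw⟩ := trunc_eq_Phi h W hWfd hg
      obtain ⟨y, z, hy, hz, hyz⟩ :=
        Submodule.codisjoint_iff_exists_add_eq.mp hPcompl.codisjoint w
      refine ⟨eP ⟨z, hz⟩, ?_⟩
      have hΘz : Θ (eP ⟨z, hz⟩) = z := by
        have hss : eP.symm (eP ⟨z, hz⟩) = ⟨z, hz⟩ := eP.symm_apply_apply _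
        rw [hΘ]
        show P.subtype ((eP.symm : (Fin q → ℝ) →ₗ[ℝ] ↥P) (eP ⟨z, hz⟩)) = z
        rw [LinearEquiv.coe_coe, hss]
        rfl
      show e ⟨Phi h W (Θ (eP ⟨z, hz⟩)), Phi_mem_relaxSpace h W _⟩ = e g
      refine congrArg e (Subtype.ext ?_)
      show Phi h W (Θ (eP ⟨z, hz⟩)) = (g : A)
      rw [hΘz, hw, ← hyz]
      have : y + z = z + y := add_comm _ _
      rw [this]
      exact (Phi_add_ann h W hy).symm
    · rintro - ⟨c, rfl⟩
      exact ⟨_, Phi_mem_trunc h W (Θ c), rfl⟩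
  rw [hrange]
  -- continuity of ψ
  have hψcont : Continuous ψ := by
    have hformula : ∀ c, ψ c = ∑ i, ∑ j, ∑ t, ∑ t', (c t * c t') •
        e ⟨h i * ((Θ (Pi.single t 1) i j : A) * (Θ (Pi.single t' 1) i j : A)),
           mem_relaxSpace_gen (Θ (Pi.single t 1) i j).2 (Θ (Pi.single t' 1) i j).2⟩ := by
      intro c
      show e ⟨Phi h W (Θ c), Phi_mem_relaxSpace h W (Θ c)⟩ = _
      have hΘc : ∀ i j, (Θ c i j : A) = ∑ t, c t • (Θ (Pi.single t 1) i j : A) := by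
        intro i j
        have h1 : Θ c = ∑ t, c t • Θ (Pi.single t 1) := by
          conv_lhs => rw [← sum_single_smul c]
          rw [map_sum]
          exact Finset.sum_congr rfl fun t _ => by rw [map_smul]
        rw [h1]
        have h2 : (∑ t, c t • Θ (Pi.single t 1)) i j
            = ∑ t, c t • (Θ (Pi.single t 1) i j) := by
          rw [Finset.sum_apply, Finset.sum_apply]
          exact Finset.sum_congr rfl fun t _ => rfl
        rw [h2]
        push_cast [Submodule.coe_sum]
        rfl
      have hsub : (⟨Phi h W (Θ c), Phi_mem_relaxSpace h W (Θ c)⟩ : ↥(relaxSpace h W))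
          = ∑ i, ∑ j, ∑ t, ∑ t', (c t * c t') •
            (⟨h i * ((Θ (Pi.single t 1) i j : A) * (Θ (Pi.single t' 1) i j : A)),
              mem_relaxSpace_gen (Θ (Pi.single t 1) i j).2 (Θ (Pi.single t' 1) i j).2⟩ :
                ↥(relaxSpace h W)) := by
        apply Subtype.ext
        push_cast [Submodule.coe_sum]
        unfold Phi
        refine Finset.sum_congr rfl fun i _ => ?_
        rw [Finset.mul_sum]
        refine Finset.sum_congr rfl fun j _ => ?_
        rw [hΘc i j]
        exact mul_expand (h i) c _
      rw [hsub, map_sum]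
      refine Finset.sum_congr rfl fun i _ => ?_
      rw [map_sum]
      refine Finset.sum_congr rfl fun j _ => ?_
      rw [map_sum]
      refine Finset.sum_congr rfl fun t _ => ?_
      rw [map_sum]
      exact Finset.sum_congr rfl fun t' _ => by rw [map_smul]
    have : ψ = fun c => ∑ i, ∑ j, ∑ t, ∑ t', (c t * c t') •
        e ⟨h i * ((Θ (Pi.single t 1) i j : A) * (Θ (Pi.single t' 1) i j : A)),
           mem_relaxSpace_gen (Θ (Pi.single t 1) i j).2 (Θ (Pi.single t' 1) i j).2⟩ :=
      funext hformula
    rw [this]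
    refine continuous_finset_sum _ fun i _ => continuous_finset_sum _ fun j _ =>
      continuous_finset_sum _ fun t _ => continuous_finset_sum _ fun t' _ => ?_
    exact ((continuous_apply t).mul (continuous_apply t')).smul continuous_const
  -- homogeneity
  have hψsmul : ∀ (t : ℝ) (c), ψ (t • c) = (t * t) • ψ c := by
    intro t c
    show e ⟨Phi h W (Θ (t • c)), Phi_mem_relaxSpace h W _⟩
      = (t * t) • e ⟨Phi h W (Θ c), Phi_mem_relaxSpace h W _⟩
    have : Θ (t • c) = t • Θ c := map_smul _ _ _
    have hsub : (⟨Phi h W (Θ (t • c)), Phi_mem_relaxSpace h W _⟩ : ↥(relaxSpace h W))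
        = (t * t) • ⟨Phi h W (Θ c), Phi_mem_relaxSpace h W _⟩ := by
      apply Subtype.ext
      show Phi h W (Θ (t • c)) = (t * t) • Phi h W (Θ c)
      rw [this, Phi_smul]
    rw [hsub, map_smul]
  -- injectivity at zero
  have hψzero : ∀ c, ψ c = 0 → c = 0 := by
    intro c hc
    have h1 : Phi h W (Θ c) = 0 := by
      have := e.injective (a₁ := ⟨Phi h W (Θ c), Phi_mem_relaxSpace h W _⟩) (a₂ := 0)
        (by rw [map_zero]; exact hc)
      exact congrArg Subtype.val this
    have h2 : Θ c ∈ N := Phi_eq_zero_ann h W K hK hdense h1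
    have h3 : Θ c ∈ P := (eP.symm c).2
    have h4 : Θ c = 0 := by
      have := hPcompl.inf_eq_bot
      have hmem : Θ c ∈ N ⊓ P := ⟨h2, h3⟩
      rw [this] at hmem
      exact hmem
    have h5 : eP.symm c = 0 := Subtype.ext h4
    have := congrArg eP h5
    rw [LinearEquiv.apply_symm_apply] at this
    rw [this]
    exact eP.map_zero
  have hψ0 : ψ 0 = 0 := by
    have := hψsmul 0 0
    simpa using this
  rcases Nat.eq_zero_or_pos q with hq0 | hqpos
  · have hall : ∀ c : Fin q → ℝ, c = 0 := by
      intro c; funext t; exact absurd t.2 (by omega)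
    have hr : Set.range ψ = {(0 : Fin d → ℝ)} := by
      apply Set.Subset.antisymm
      · rintro - ⟨c, rfl⟩
        rw [hall c, hψ0]
        rfl
      · rintro z (rfl : z = 0)
        exact ⟨0, hψ0⟩
    rw [hr]
    exact isClosed_singleton
  · haveI : Nonempty (Fin q) := ⟨⟨0, hqpos⟩⟩
    have hsne : (Metric.sphere (0 : Fin q → ℝ) 1).Nonempty :=
      NormedSpace.sphere_nonempty.mpr (by norm_num)
    obtain ⟨c₀, hc₀S, hminOn⟩ := (isCompact_sphere (0 : Fin q → ℝ) 1).exists_isMinOn hsne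
      ((continuous_norm.comp hψcont).continuousOn)
    have hmin : ∀ c ∈ Metric.sphere (0 : Fin q → ℝ) 1, ‖ψ c₀‖ ≤ ‖ψ c‖ := fun c hc =>
      hminOn hc
    set m := ‖ψ c₀‖ with hmdef
    have hm : 0 < m := by
      rw [hmdef, norm_pos_iff]
      intro h0
      have : c₀ = 0 := hψzero _ h0
      rw [this] at hc₀S
      simp at hc₀S
    have hbound : ∀ c : Fin q → ℝ, m * (‖c‖ * ‖c‖) ≤ ‖ψ c‖ := by
      intro c
      rcases eq_or_ne c 0 with rfl | hc0
      · simp [hψ0]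
      · have hnc : 0 < ‖c‖ := norm_pos_iff.mpr hc0
        set ch : Fin q → ℝ := ‖c‖⁻¹ • c with hch
        have hchS : ch ∈ Metric.sphere (0 : Fin q → ℝ) 1 := by
          rw [mem_sphere_zero_iff_norm, hch, norm_smul, norm_inv, norm_norm,
            inv_mul_cancel₀ hnc.ne']
        have hceq : c = ‖c‖ • ch := by
          rw [hch, smul_inv_smul₀ hnc.ne']
        have hψc : ψ c = (‖c‖ * ‖c‖) • ψ ch := by
          conv_lhs => rw [hceq]
          exact hψsmul _ _
        rw [hψc, norm_smul]
        have h1 : ‖(‖c‖ * ‖c‖)‖ = ‖c‖ * ‖c‖ := by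
          rw [Real.norm_eq_abs, abs_of_nonneg (mul_nonneg hnc.le hnc.le)]
        rw [h1, mul_comm m]
        exact mul_le_mul_of_nonneg_left (hmin ch hchS) (mul_nonneg hnc.le hnc.le)
    refine IsSeqClosed.isClosed ?_
    intro z y hz hzy
    choose cs hcs using hz
    obtain ⟨R, hR⟩ := hzy.norm.bddAbove_range
    have hRnn : ∀ n, ‖z n‖ ≤ R := fun n => hR ⟨n, rfl⟩
    set B := Real.sqrt (R / m) with hB
    have hcB : ∀ n, ‖cs n‖ ≤ B := by
      intro n
      have h1 : m * (‖cs n‖ * ‖cs n‖) ≤ ‖z n‖ := by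
        have := hbound (cs n)
        rwa [hcs n] at this
      have h2 : ‖cs n‖ * ‖cs n‖ ≤ R / m := by
        rw [le_div_iff₀ hm, mul_comm]
        exact h1.trans (hRnn n)
      calc ‖cs n‖ = Real.sqrt (‖cs n‖ * ‖cs n‖) := (Real.sqrt_mul_self (norm_nonneg _)).symm
      _ ≤ Real.sqrt (R / m) := Real.sqrt_le_sqrt h2
    have hcball : ∀ n, cs n ∈ Metric.closedBall (0 : Fin q → ℝ) B := by
      intro n
      rw [Metric.mem_closedBall, dist_zero_right]
      exact hcB n
    obtain ⟨cinf, _, φ, hφmono, hφtendsto⟩ :=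
      (isCompact_closedBall (0 : Fin q → ℝ) B).tendsto_subseq hcball
    have h1 : Filter.Tendsto (fun k => ψ (cs (φ k))) Filter.atTop (nhds (ψ cinf)) :=
      ((hψcont.tendsto cinf).comp hφtendsto)
    have h1' : Filter.Tendsto (fun k => z (φ k)) Filter.atTop (nhds (ψ cinf)) := by
      have : (fun k => ψ (cs (φ k))) = fun k => z (φ k) := funext fun k => hcs (φ k)
      rwa [this] at h1
    have h2 : Filter.Tendsto (fun k => z (φ k)) Filter.atTop (nhds y) :=
      hzy.comp (hφmono.tendsto_atTop)
    exact ⟨cinf, tendsto_nhds_unique h1' h2⟩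

end MomentAux

namespace MomentAux

variable {A : Type} [CommRing A] [Algebra ℝ A] {r : ℕ}

lemma mul_expand2 {p q : ℕ} (a : A) (c : Fin p → ℝ) (d : Fin q → ℝ)
    (δ : Fin p → A) (γ : Fin q → A) :
    a * ((∑ t, c t • δ t) * (∑ s, d s • γ s))
      = ∑ t, ∑ s, (c t * d s) • (a * (δ t * γ s)) := by
  rw [Finset.sum_mul_sum, Finset.mul_sum]
  refine Finset.sum_congr rfl fun t _ => ?_
  rw [Finset.mul_sum]
  refine Finset.sum_congr rfl fun s _ => ?_
  rw [smul_mul_smul_comm, mul_smul_comm]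

lemma relaxSpace_findim (h : Fin (r+1) → A) (W : Fin (r+1) → Submodule ℝ A)
    (hWfd : ∀ i, FiniteDimensional ℝ ↥(W i)) :
    FiniteDimensional ℝ ↥(relaxSpace h W) := by
  classical
  haveI : ∀ i, FiniteDimensional ℝ ↥(W i) := hWfd
  set b : ∀ i, Module.Basis (Fin (Module.finrank ℝ ↥(W i))) ℝ ↥(W i) :=
    fun i => Module.finBasis ℝ ↥(W i) with hb
  set g : ((i : Fin (r+1)) × (Fin (Module.finrank ℝ ↥(W i)) × Fin (Module.finrank ℝ ↥(W i)))) → A :=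
    fun p => h p.1 * ((b p.1 p.2.1 : A) * (b p.1 p.2.2 : A)) with hg
  have hle : relaxSpace h W ≤ Submodule.span ℝ (Set.range g) := by
    rw [relaxSpace, Submodule.span_le]
    rintro a ⟨i, u, hu, v, hv, rfl⟩
    have hu' : u = ∑ k, ((b i).repr ⟨u, hu⟩ k) • ((b i k : A)) := by
      have := (b i).sum_repr ⟨u, hu⟩
      calc u = ((⟨u, hu⟩ : ↥(W i)) : A) := rfl
      _ = ((∑ k, ((b i).repr ⟨u, hu⟩ k) • (b i k) : ↥(W i)) : A) := by rw [this]
      _ = ∑ k, ((b i).repr ⟨u, hu⟩ k) • ((b i k : A)) := by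
          push_cast [Submodule.coe_sum]; rfl
    have hv' : v = ∑ k, ((b i).repr ⟨v, hv⟩ k) • ((b i k : A)) := by
      have := (b i).sum_repr ⟨v, hv⟩
      calc v = ((⟨v, hv⟩ : ↥(W i)) : A) := rfl
      _ = ((∑ k, ((b i).repr ⟨v, hv⟩ k) • (b i k) : ↥(W i)) : A) := by rw [this]
      _ = ∑ k, ((b i).repr ⟨v, hv⟩ k) • ((b i k : A)) := by
          push_cast [Submodule.coe_sum]; rfl
    rw [hu', hv', mul_expand2]
    apply Submodule.sum_mem
    intro k _
    apply Submodule.sum_mem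
    intro l _
    refine Submodule.smul_mem _ _ (Submodule.subset_span ?_)
    exact ⟨⟨i, k, l⟩, rfl⟩
  haveI : FiniteDimensional ℝ ↥(Submodule.span ℝ (Set.range g)) :=
    FiniteDimensional.span_of_finite ℝ (Set.finite_range g)
  exact Submodule.finiteDimensional_of_le hle

end MomentAux

namespace MomentAux

variable {A : Type} [CommRing A] [Algebra ℝ A] {r : ℕ}

lemma stability_of_neg_one (h : Fin (r+1) → A) (h0 : h 0 = 1)
    (hneg : (-1 : A) ∈ quadModule h)
    (L : Submodule ℝ A) (hLfd : FiniteDimensional ℝ ↥L) :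
    ∃ W : Fin (r+1) → Submodule ℝ A, (∀ i, FiniteDimensional ℝ ↥(W i)) ∧
      ∀ f : A, f ∈ L → f ∈ truncQuadModule h W := by
  classical
  obtain ⟨τ, hτ, hsum⟩ := hneg
  have hch : ∀ i, ∃ (Ni : ℕ) (t : Fin Ni → A), τ i = ∑ j, t j * t j := by
    intro i
    obtain ⟨Ni, t, _, ht⟩ := hτ i
    exact ⟨Ni, t, ht⟩
  choose N t ht using hch
  set E : Submodule ℝ A := L ⊔ Submodule.span ℝ {1} with hE
  haveI : FiniteDimensional ℝ ↥E := by
    rw [hE]; infer_instance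
  set W : Fin (r+1) → Submodule ℝ A :=
    fun i => E ⊔ ⨆ j : Fin (N i), E.map (LinearMap.mulRight ℝ (t i j)) with hW
  have hWeq : ∀ i, W i = E ⊔ ⨆ j : Fin (N i), E.map (LinearMap.mulRight ℝ (t i j)) :=
    fun i => rfl
  have hWfd : ∀ i, FiniteDimensional ℝ ↥(W i) := by
    intro i; rw [hWeq i]; infer_instance
  have h1E : (1:A) ∈ E := Submodule.mem_sup_right (Submodule.mem_span_singleton_self 1)
  refine ⟨W, hWfd, fun f hfL => ?_⟩
  have hfE : f ∈ E := Submodule.mem_sup_left hfL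
  set p : A := (2:ℝ)⁻¹ • (f + 1) with hp
  set qq : A := (2:ℝ)⁻¹ • (f - 1) with hqq
  have hpE : p ∈ E := Submodule.smul_mem _ _ (Submodule.add_mem _ hfE h1E)
  have hqE : qq ∈ E := Submodule.smul_mem _ _ (Submodule.sub_mem _ hfE h1E)
  have hqt : ∀ i j, qq * t i j ∈ W i := by
    intro i j
    refine Submodule.mem_sup_right (Submodule.mem_iSup_of_mem j ?_)
    exact ⟨qq, hqE, rfl⟩
  have hqτ : ∀ i, IsSumSqFrom (W i) (qq * qq * τ i) := by
    intro i
    refine ⟨N i, fun j => qq * t i j, hqt i, ?_⟩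
    rw [ht i, Finset.mul_sum]
    exact Finset.sum_congr rfl fun j _ => by ring
  set σ : Fin (r+1) → A := fun i => qq * qq * τ i + (if i = 0 then p * p else 0) with hσ
  refine ⟨σ, fun i => ?_, ?_⟩
  · rcases eq_or_ne i 0 with hi | hi
    · have : σ i = qq * qq * τ i + p * p := by rw [hσ]; simp [hi]
      rw [this]
      refine (hqτ i).add (isSumSqFrom_sq ?_)
      rw [hi]
      exact Submodule.mem_sup_left hpE
    · have : σ i = qq * qq * τ i := by rw [hσ]; simp [hi]
      rw [this]
      exact hqτ i
  · have hsplit : ∑ i, σ i * h i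
        = ∑ i, (qq * qq) * (τ i * h i) + ∑ i, (if i = 0 then p * p else 0) * h i := by
      rw [← Finset.sum_add_distrib]
      refine Finset.sum_congr rfl fun i _ => by rw [hσ]; ring
    have hsecond : ∑ i, (if i = 0 then p * p else 0) * h i = p * p := by
      rw [Finset.sum_eq_single 0]
      · rw [if_pos rfl, h0, mul_one]
      · intro i _ hi; rw [if_neg hi, zero_mul]
      · intro hmem; exact absurd (Finset.mem_univ _) hmem
    have hfirst : ∑ i, (qq * qq) * (τ i * h i) = (qq * qq) * (-1) := by
      rw [← Finset.mul_sum, ← hsum]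
    have h4f : (f + 1) * (f + 1) - (f - 1) * (f - 1) = (4:ℝ) • f := by
      have h1 : (f + 1) * (f + 1) - (f - 1) * (f - 1) = 4 * f := by ring
      rw [h1, Algebra.smul_def, map_ofNat]
    have hpq : p * p - qq * qq = f := by
      rw [hp, hqq, smul_mul_smul_comm, smul_mul_smul_comm, ← smul_sub, h4f, smul_smul]
      norm_num
    rw [hsplit, hsecond, hfirst]
    linear_combination -hpq

end MomentAux

namespace MomentAux

variable {A : Type} [CommRing A] [Algebra ℝ A] {r : ℕ}

set_option maxHeartbeats 1000000 in
lemma direction_i_ii [IsReduced A]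
    (h : Fin (r+1) → A) (h0 : h 0 = 1)
    (K : Set (A →ₐ[ℝ] ℝ)) (hK : K = {ξ | ∀ i, 0 ≤ ξ (h i)})
    (hdense : ∀ f : A, (∀ ξ ∈ K, ξ f = 0) → f = 0)
    (hfg : {f : A | ∀ ξ ∈ K, 0 ≤ ξ f} = quadModule h)
    (hexact : ∀ (n : ℕ) (x : Fin n → A),
      ∃ W : Fin (r+1) → Submodule ℝ A, (∀ i, FiniteDimensional ℝ ↥(W i)) ∧
        ∃ (h1 : (1:A) ∈ relaxSpace h W) (hx : ∀ i, x i ∈ relaxSpace h W),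
          closure (convexHull ℝ ((fun ξ : A →ₐ[ℝ] ℝ => fun i => ξ (x i)) '' K))
            = closure (relaxSet x h W h1 hx))
    (L : Submodule ℝ A) (hLfd : FiniteDimensional ℝ ↥L) :
    ∃ W : Fin (r+1) → Submodule ℝ A, (∀ i, FiniteDimensional ℝ ↥(W i)) ∧
      ∀ f : A, (∀ ξ ∈ K, 0 ≤ ξ f) → f ∈ L → f ∈ truncQuadModule h W := by
  classical
  rcases Set.eq_empty_or_nonempty K with hKe | ⟨ξ₀, hξ₀⟩
  · -- K empty : -1 is in the quadratic module, every element is a member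
    have hneg : (-1 : A) ∈ quadModule h := by
      rw [← hfg]
      intro ξ hξ
      rw [hKe] at hξ
      exact absurd hξ (Set.notMem_empty ξ)
    obtain ⟨W, hWfd, hmem⟩ := stability_of_neg_one h h0 hneg L hLfd
    exact ⟨W, hWfd, fun f _ hfL => hmem f hfL⟩
  -- K nonempty
  set E : Submodule ℝ A := L ⊔ Submodule.span ℝ {1} with hE
  haveI : FiniteDimensional ℝ ↥E := by rw [hE]; infer_instance
  set n := Module.finrank ℝ ↥E with hn
  set bE : Module.Basis (Fin n) ℝ ↥E := Module.finBasis ℝ ↥E with hbE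
  set x : Fin n → A := fun i => (bE i : A) with hx
  have hxE : ∀ i, x i ∈ E := fun i => (bE i).2
  have hEspan : ∀ f, (hf : f ∈ E) → f = ∑ i, (bE.repr ⟨f, hf⟩ i) • x i := by
    intro f hf
    have := bE.sum_repr ⟨f, hf⟩
    calc f = ((⟨f, hf⟩ : ↥E) : A) := rfl
    _ = ((∑ i, (bE.repr ⟨f, hf⟩ i) • bE i : ↥E) : A) := by rw [this]
    _ = ∑ i, (bE.repr ⟨f, hf⟩ i) • x i := by push_cast [Submodule.coe_sum]; rfl
  obtain ⟨W0, hW0fd, h1, hxmem, hclosure⟩ := hexact n x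
  set W : Fin (r+1) → Submodule ℝ A := fun i => if i = 0 then W0 0 ⊔ E else W0 i with hW
  have hWeq : ∀ i, W i = if i = 0 then W0 0 ⊔ E else W0 i := fun i => rfl
  have hWle : ∀ i, W0 i ≤ W i := by
    intro i; rw [hWeq i]; split_ifs with hi
    · subst hi; exact le_sup_left
    · exact le_rfl
  have hEW0 : E ≤ W 0 := by rw [hWeq 0, if_pos rfl]; exact le_sup_right
  have hWfd : ∀ i, FiniteDimensional ℝ ↥(W i) := by
    intro i
    haveI := hW0fd i
    haveI := hW0fd 0
    rcases eq_or_ne i 0 with hi | hi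
    · rw [hWeq i, if_pos hi]; infer_instance
    · rw [hWeq i, if_neg hi]; exact hW0fd i
  have h1E : (1:A) ∈ E := Submodule.mem_sup_right (Submodule.mem_span_singleton_self 1)
  have h1' : (1:A) ∈ relaxSpace h W := relaxSpace_mono hWle h1
  have hx' : ∀ i, x i ∈ relaxSpace h W := fun i => relaxSpace_mono hWle (hxmem i)
  have hEU : E ≤ relaxSpace h W := by
    intro g hg
    have : g = h 0 * (g * 1) := by rw [h0]; ring
    rw [this]
    exact mem_relaxSpace_gen (hEW0 hg) (hEW0 h1E)
  -- closure equality for the enlarged tuple W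
  have hclosure' :
      closure (convexHull ℝ ((fun ξ : A →ₐ[ℝ] ℝ => fun i => ξ (x i)) '' K))
        = closure (relaxSet x h W h1' hx') := by
    apply Set.Subset.antisymm
    · refine closure_mono (convexHull_min ?_ (relaxSet_convex x h W h1' hx'))
      rintro η ⟨ξ, hξK, rfl⟩
      rw [hK] at hξK
      exact eval_mem_relaxSet hξK
    · rw [hclosure]
      exact closure_mono (relaxSet_antitone hWle)
  refine ⟨W, hWfd, fun f hfP hfL => ?_⟩
  by_contra hfM
  -- set up coordinates on U = relaxSpace h W
  haveI hUfd : FiniteDimensional ℝ ↥(relaxSpace h W) := relaxSpace_findim h W hWfd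
  set d := Module.finrank ℝ ↥(relaxSpace h W) with hd
  set e : ↥(relaxSpace h W) ≃ₗ[ℝ] (Fin d → ℝ) := (Module.finBasis ℝ _).equivFun with he
  set C : Set (Fin d → ℝ) := (fun g : ↥(relaxSpace h W) => e g) ''
      {g : ↥(relaxSpace h W) | (g : A) ∈ truncQuadModule h W} with hC
  have hCclosed : IsClosed C := trunc_image_closed h K hK hdense W hWfd e
  have hCconvex : Convex ℝ C := by
    rintro - ⟨g1, hg1, rfl⟩ - ⟨g2, hg2, rfl⟩ a b ha hb hab
    refine ⟨a • g1 + b • g2, ?_, ?_⟩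
    · show ((a • g1 + b • g2 : ↥(relaxSpace h W)) : A) ∈ truncQuadModule h W
      have : ((a • g1 + b • g2 : ↥(relaxSpace h W)) : A) = a • (g1 : A) + b • (g2 : A) := rfl
      rw [this]
      exact trunc_add (trunc_smul ha hg1) (trunc_smul hb hg2)
    · show e (a • g1 + b • g2) = _
      rw [map_add, map_smul, map_smul]
  have hfE : f ∈ E := Submodule.mem_sup_left hfL
  have hfU : f ∈ relaxSpace h W := hEU hfE
  have hFC : e ⟨f, hfU⟩ ∉ C := by
    rintro ⟨g, hgM, hge⟩
    have : g = ⟨f, hfU⟩ := e.injective hge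
    rw [this] at hgM
    exact hfM hgM
  obtain ⟨ψf, u, hCu, huF⟩ := geometric_hahn_banach_closed_point hCconvex hCclosed hFC
  have h0C : (0 : Fin d → ℝ) ∈ C := by
    refine ⟨0, ?_, map_zero e⟩
    show ((0 : ↥(relaxSpace h W)) : A) ∈ truncQuadModule h W
    rw [ZeroMemClass.coe_zero]
    exact trunc_zero h W
  have hu0 : 0 < u := by
    have := hCu 0 h0C
    rwa [map_zero] at this
  have hCnonpos : ∀ a ∈ C, ψf a ≤ 0 := by
    intro a haC
    by_contra hpos
    push_neg at hpos
    set tt := (u + 1) / ψf a with htt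
    have htt0 : 0 ≤ tt := div_nonneg (by linarith) hpos.le
    have htaC : tt • a ∈ C := by
      obtain ⟨g, hgM, rfl⟩ := haC
      refine ⟨tt • g, ?_, ?_⟩
      · show ((tt • g : ↥(relaxSpace h W)) : A) ∈ truncQuadModule h W
        have : ((tt • g : ↥(relaxSpace h W)) : A) = tt • (g : A) := rfl
        rw [this]
        exact trunc_smul htt0 hgM
      · show e (tt • g) = _
        rw [map_smul]
    have := hCu _ htaC
    rw [map_smul, smul_eq_mul, htt, div_mul_cancel₀ _ hpos.ne'] at this
    linarith
  set lam : Module.Dual ℝ ↥(relaxSpace h W) :=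
    { toFun := fun g => -(ψf (e g)),
      map_add' := by
        intro g1 g2
        show -(ψf (e (g1 + g2))) = -(ψf (e g1)) + -(ψf (e g2))
        rw [map_add, map_add]; ring
      map_smul' := by
        intro c g
        show -(ψf (e (c • g))) = c • -(ψf (e g))
        rw [map_smul, map_smul]
        simp only [smul_eq_mul]
        ring } with hlam
  have hlamapp : ∀ g : ↥(relaxSpace h W), lam g = -(ψf (e g)) := fun g => rfl
  have hlamM : ∀ g : ↥(relaxSpace h W), (g : A) ∈ truncQuadModule h W → 0 ≤ lam g := by
    intro g hg
    have : ψf (e g) ≤ 0 := hCnonpos _ ⟨g, hg, rfl⟩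
    rw [hlamapp g]
    linarith
  have hlamf : lam ⟨f, hfU⟩ < 0 := by
    rw [hlamapp]
    linarith
  set ev : Module.Dual ℝ ↥(relaxSpace h W) :=
    ξ₀.toLinearMap.comp (relaxSpace h W).subtype with hev
  have hevM : ∀ g : ↥(relaxSpace h W), (g : A) ∈ truncQuadModule h W → 0 ≤ ev g := by
    intro g hg
    refine trunc_eval_nonneg ξ₀ ?_ hg
    rw [hK] at hξ₀
    exact hξ₀
  have h1U : (1:A) ∈ relaxSpace h W := h1'
  have h1M : (1:A) ∈ truncQuadModule h W := trunc_one h0 (hEW0 h1E)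
  have hlam1 : 0 ≤ lam ⟨1, h1U⟩ := hlamM _ h1M
  set s := lam ⟨1, h1U⟩ with hs
  -- the affine functional coming from f
  set a : Fin n → ℝ := fun i => bE.repr ⟨f, hfE⟩ i with ha
  have hfsum : f = ∑ i, a i • x i := hEspan f hfE
  have hellconv : ∀ z ∈ closure (convexHull ℝ
      ((fun ξ : A →ₐ[ℝ] ℝ => fun i => ξ (x i)) '' K)), 0 ≤ ∑ i, a i * z i := by
    have hhalf : convexHull ℝ ((fun ξ : A →ₐ[ℝ] ℝ => fun i => ξ (x i)) '' K)
        ⊆ {z : Fin n → ℝ | 0 ≤ ∑ i, a i * z i} := by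
      refine convexHull_min ?_ ?_
      · rintro - ⟨ξ, hξK, rfl⟩
        show (0:ℝ) ≤ ∑ i, a i * ξ (x i)
        have : ∑ i, a i * ξ (x i) = ξ f := by
          rw [hfsum, map_sum]
          exact Finset.sum_congr rfl fun i _ => by rw [map_smul, smul_eq_mul]
        rw [this]
        exact hfP ξ hξK
      · refine convex_halfSpace_ge ⟨fun y z => ?_, fun c y => ?_⟩ 0
        · simp only [Pi.add_apply]
          rw [← Finset.sum_add_distrib]
          exact Finset.sum_congr rfl fun i _ => by ring
        · simp only [Pi.smul_apply, smul_eq_mul, Finset.mul_sum]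
          exact Finset.sum_congr rfl fun i _ => by ring
    have hclosed : IsClosed {z : Fin n → ℝ | 0 ≤ ∑ i, a i * z i} := by
      have hcont : Continuous fun z : Fin n → ℝ => ∑ i, a i * z i :=
        continuous_finset_sum _ fun i _ => (continuous_const.mul (continuous_apply i))
      exact isClosed_le continuous_const hcont
    intro z hz
    exact closure_minimal hhalf hclosed hz
  -- for every positive ε we get a contradiction bound
  have hkey : ∀ ε : ℝ, 0 < ε → 0 ≤ lam ⟨f, hfU⟩ + ε * ξ₀ f := by
    intro ε hε
    set μ : Module.Dual ℝ ↥(relaxSpace h W) := (s + ε)⁻¹ • (lam + ε • ev) with hμ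
    have hsε : 0 < s + ε := by linarith
    have hμM : ∀ g : ↥(relaxSpace h W), (g : A) ∈ truncQuadModule h W → 0 ≤ μ g := by
      intro g hg
      rw [hμ]
      simp only [LinearMap.smul_apply, LinearMap.add_apply, smul_eq_mul]
      have h1 : 0 ≤ lam g + ε * ev g :=
        add_nonneg (hlamM g hg) (mul_nonneg hε.le (hevM g hg))
      exact mul_nonneg (inv_nonneg.mpr hsε.le) h1
    have hev1 : ev ⟨1, h1U⟩ = 1 := by
      rw [hev]
      simp only [LinearMap.comp_apply]
      exact map_one ξ₀
    have hμ1 : μ ⟨1, h1U⟩ = 1 := by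
      rw [hμ]
      simp only [LinearMap.smul_apply, LinearMap.add_apply, smul_eq_mul, hev1, ← hs]
      field_simp
    have hη : (fun i => μ ⟨x i, hx' i⟩) ∈ relaxSet x h W h1' hx' :=
      ⟨μ, hμM, hμ1, fun i => rfl⟩
    have hηconv : (fun i => μ ⟨x i, hx' i⟩) ∈ closure (convexHull ℝ
        ((fun ξ : A →ₐ[ℝ] ℝ => fun i => ξ (x i)) '' K)) := by
      rw [hclosure']
      exact subset_closure hη
    have hμf : ∑ i, a i * μ ⟨x i, hx' i⟩ = μ ⟨f, hfU⟩ := by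
      have hsub : (⟨f, hfU⟩ : ↥(relaxSpace h W)) = ∑ i, a i • ⟨x i, hx' i⟩ := by
        apply Subtype.ext
        push_cast [Submodule.coe_sum]
        exact hfsum
      rw [hsub, map_sum]
      exact Finset.sum_congr rfl fun i _ => by rw [map_smul, smul_eq_mul]
    have h0μf : 0 ≤ μ ⟨f, hfU⟩ := by
      rw [← hμf]
      exact hellconv _ hηconv
    have hevf : ev ⟨f, hfU⟩ = ξ₀ f := rfl
    rw [hμ] at h0μf
    simp only [LinearMap.smul_apply, LinearMap.add_apply, smul_eq_mul, hevf] at h0μf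
    have hmul := mul_nonneg hsε.le h0μf
    rw [← mul_assoc, mul_inv_cancel₀ hsε.ne', one_mul] at hmul
    exact hmul
  -- derive the contradiction
  have hT : 0 ≤ ξ₀ f := hfP ξ₀ hξ₀
  set ε := -(lam ⟨f, hfU⟩) / (ξ₀ f + 1) with hεdef
  have hε : 0 < ε := div_pos (by linarith) (by linarith)
  have hineq := hkey ε hε
  have hu' : ε * (ξ₀ f + 1) = -(lam ⟨f, hfU⟩) := by
    rw [hεdef]
    field_simp
  have hu'' : ε * ξ₀ f = -(lam ⟨f, hfU⟩) - ε := by linear_combination hu'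
  linarith [hineq, hu'', hε, hlamf]

end MomentAux

/-- **Corollary.** Let `V` be an affine ℝ-variety with coordinate ring `A`, let
`K ⊆ V(ℝ)` be a basic closed semialgebraic set, Zariski dense in `V`, and assume the
saturated preordering `𝒫(K)` is finitely generated, say `𝒫(K) = Σh₀ + ⋯ + Σh_r` with
`h₀ = 1`. Then the following are equivalent:
(i) for every `n` and every morphism `φ : V → 𝔸ⁿ` (given by `x₁, …, x_n ∈ A`), the moment
relaxation for the closed convex hull of `φ(K)` becomes exact for some tuple `W` of
finite-dimensional subspaces;
(ii) the preordering `𝒫(K)` is stable: for every finite-dimensional subspace `L ⊆ A`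
there is a tuple `W` of finite-dimensional subspaces with `𝒫(K) ∩ L ⊆ M_W`. -/
theorem moment_relaxation_exact_for_all_morphisms_iff_stable
    {A : Type} [CommRing A] [Algebra ℝ A] [Algebra.FiniteType ℝ A] [IsReduced A]
    {r : ℕ} (h : Fin (r+1) → A) (h0 : h 0 = 1)
    (K : Set (A →ₐ[ℝ] ℝ)) (hK : K = {ξ | ∀ i, 0 ≤ ξ (h i)})
    (hdense : ∀ f : A, (∀ ξ ∈ K, ξ f = 0) → f = 0)
    (hfg : {f : A | ∀ ξ ∈ K, 0 ≤ ξ f} = quadModule h) :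
    -- (i)
    ((∀ (n : ℕ) (x : Fin n → A),
      ∃ W : Fin (r+1) → Submodule ℝ A, (∀ i, FiniteDimensional ℝ ↥(W i)) ∧
        ∃ (h1 : (1:A) ∈ relaxSpace h W) (hx : ∀ i, x i ∈ relaxSpace h W),
          closure (convexHull ℝ ((fun ξ : A →ₐ[ℝ] ℝ => fun i => ξ (x i)) '' K))
            = closure (relaxSet x h W h1 hx))
    -- (ii)
    ↔ (∀ L : Submodule ℝ A, FiniteDimensional ℝ ↥L →
        ∃ W : Fin (r+1) → Submodule ℝ A, (∀ i, FiniteDimensional ℝ ↥(W i)) ∧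
          ∀ f : A, (∀ ξ ∈ K, 0 ≤ ξ f) → f ∈ L → f ∈ truncQuadModule h W)) := by
  constructor
  · intro hi L hL
    exact MomentAux.direction_i_ii h h0 K hK hdense hfg hi L hL
  · intro hii n x
    exact MomentAux.direction_ii_i h h0 K hK hii n x
end

section
/- Let f, g ∈ B'[x, y] be polynomials such that the coefficient-wise reduced polynomials f̄, ḡ ∈ ℂ[x, y] are not identically zero. Assume f(0,0) = g(0,0) = 0, and assume that the curves f̄ = 0 and ḡ = 0 in ℂ² intersect transversally at (0,0). Then the curves f = 0 and g = 0 in R'² intersect transversally at (0,0), and they do not intersect in any point (a, b) ≠ (0,0) with a, b ∈ m'. -/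
open scoped TensorProduct

/-- A real closed field: an ordered field in which every nonnegative element is a square
and every odd-degree polynomial has a root. -/
class IsRealClosedField (R : Type*) [Field R] [LinearOrder R] [IsStrictOrderedRing R] : Prop where
  exists_sqrt : ∀ {x : R}, 0 ≤ x → ∃ y : R, y * y = x
  exists_root_of_odd_natDegree : ∀ p : Polynomial R, Odd p.natDegree → ∃ x : R, p.IsRoot x

section Bounded

variable (R : Type) [Field R] [LinearOrder R] [IsStrictOrderedRing R] [Algebra ℝ R]

lemma algebraMap_real_mono : Monotone (algebraMap ℝ R) := by
  intro a b hab
  have h : algebraMap ℝ R (b - a) = algebraMap ℝ R (Real.sqrt (b - a)) ^ 2 := by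
    rw [← map_pow, Real.sq_sqrt (by linarith)]
  have h0 : (0 : R) ≤ algebraMap ℝ R (b - a) := by rw [h]; positivity
  rw [map_sub] at h0
  linarith

/-- The convex hull `B` of `ℝ` in `R`: the valuation subring of bounded elements,
realized as an ℝ-subalgebra. -/
def boundedSubalgebra : Subalgebra ℝ R where
  carrier := {x | ∃ c : ℝ, |x| ≤ algebraMap ℝ R c}
  add_mem' := by
    rintro x y ⟨c, hc⟩ ⟨d, hd⟩
    exact ⟨c + d, by
      rw [map_add]
      exact (abs_add_le x y).trans (add_le_add hc hd)⟩
  mul_mem' := by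
    rintro x y ⟨c, hc⟩ ⟨d, hd⟩
    refine ⟨c * d, ?_⟩
    rw [map_mul, abs_mul]
    exact mul_le_mul hc hd (abs_nonneg y) ((abs_nonneg x).trans hc)
  algebraMap_mem' := fun c => ⟨|c|, abs_le.mpr ⟨by
      rw [← map_neg]
      exact algebraMap_real_mono R (neg_abs_le c),
    algebraMap_real_mono R (le_abs_self c)⟩⟩

/-- `x ∈ R` is infinitesimal: `|x| < c` for every positive real `c`.  The infinitesimal
elements of `B` form the maximal ideal `m` of the valuation ring `B`, with `B/m = ℝ`. -/
def Infinitesimal (x : R) : Prop :=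
  ∀ c : ℝ, 0 < c → |x| < algebraMap ℝ R c

end Bounded

section Bprime

variable (R : Type) [Field R] [LinearOrder R] [IsStrictOrderedRing R] [Algebra ℝ R]
variable (i' : AlgebraicClosure R) (hi' : i' * i' = -1)

/-- `B' = B[√-1]`: the valuation ring of `R' = R(√-1)` (the algebraic closure of `R`)
extending the convex hull `B` of `ℝ` in `R`; its residue field is `ℂ`. -/
def boundedSubringC : Subring (AlgebraicClosure R) where
  carrier := {z | ∃ a b : R, a ∈ boundedSubalgebra R ∧ b ∈ boundedSubalgebra R ∧
    z = algebraMap R (AlgebraicClosure R) a + algebraMap R (AlgebraicClosure R) b * i'}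
  zero_mem' := ⟨0, 0, zero_mem _, zero_mem _, by simp⟩
  one_mem' := ⟨1, 0, one_mem _, zero_mem _, by simp⟩
  add_mem' := by
    rintro x y ⟨a, b, ha, hb, rfl⟩ ⟨c, d, hc, hd, rfl⟩
    exact ⟨a + c, b + d, add_mem ha hc, add_mem hb hd, by rw [map_add, map_add]; ring⟩
  neg_mem' := by
    rintro x ⟨a, b, ha, hb, rfl⟩
    exact ⟨-a, -b, neg_mem ha, neg_mem hb, by rw [map_neg, map_neg]; ring⟩
  mul_mem' := by
    rintro x y ⟨a, b, ha, hb, rfl⟩ ⟨c, d, hc, hd, rfl⟩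
    refine ⟨a * c - b * d, a * d + b * c, sub_mem (mul_mem ha hc) (mul_mem hb hd),
      add_mem (mul_mem ha hd) (mul_mem hb hc), ?_⟩
    simp only [map_sub, map_add, map_mul]
    linear_combination (algebraMap R (AlgebraicClosure R) b *
      algebraMap R (AlgebraicClosure R) d) * hi'

/-- The canonical inclusion `ℝ → B'`. -/
noncomputable def realToBc : ℝ →+* ↥(boundedSubringC R i' hi') where
  toFun c := ⟨algebraMap R (AlgebraicClosure R) (algebraMap ℝ R c),
    ⟨algebraMap ℝ R c, 0, (boundedSubalgebra R).algebraMap_mem c, zero_mem _, by simp⟩⟩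
  map_one' := by ext; simp
  map_mul' x y := by ext; simp
  map_zero' := by ext; simp
  map_add' x y := by ext; simp

end Bprime
section AuxR
variable (R : Type) [Field R] [LinearOrder R] [IsStrictOrderedRing R] [Algebra ℝ R]

variable {R}

lemma algebraMap_real_strictMono : StrictMono (algebraMap ℝ R) :=
  (algebraMap_real_mono R).strictMono_of_injective (algebraMap ℝ R).injective

lemma jmap_nonneg {c : ℝ} (hc : 0 ≤ c) : (0:R) ≤ algebraMap ℝ R c := by
  have := algebraMap_real_mono R hc; simpa using this

lemma exists_standardPart {x : R} (c : ℝ) (hc : |x| ≤ algebraMap ℝ R c) :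
    ∃ s : ℝ, Infinitesimal R (x - algebraMap ℝ R s) := by
  set S : Set ℝ := {r | algebraMap ℝ R r ≤ x} with hS
  have hneg : (-c) ∈ S := by
    have h1 := (abs_le.mp hc).1
    have : algebraMap ℝ R (-c) ≤ x := by rw [map_neg]; linarith
    exact this
  have hub : ∀ r ∈ S, r ≤ c := by
    intro r hr
    have h1 : algebraMap ℝ R r ≤ algebraMap ℝ R c :=
      le_trans hr (le_trans (le_abs_self x) hc)
    exact (algebraMap_real_strictMono.le_iff_le).mp h1
  have hbdd : BddAbove S := ⟨c, hub⟩
  set s := sSup S with hs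
  refine ⟨s, fun ε hε => ?_⟩
  have h1 : algebraMap ℝ R (s - ε / 2) ≤ x := by
    obtain ⟨r, hrS, hr⟩ := exists_lt_of_lt_csSup ⟨-c, hneg⟩ (show s - ε / 2 < s by linarith)
    exact le_trans (algebraMap_real_mono R hr.le) hrS
  have h2 : x < algebraMap ℝ R (s + ε) := by
    by_contra h
    push_neg at h
    have : s + ε ≤ s := le_csSup hbdd h
    linarith
  rw [abs_sub_lt_iff]
  constructor
  · have h3 : algebraMap ℝ R (s + ε) = algebraMap ℝ R s + algebraMap ℝ R ε := map_add _ _ _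
    linarith
  · have h3 : algebraMap ℝ R (s - ε / 2) = algebraMap ℝ R s - algebraMap ℝ R (ε / 2) := map_sub _ _ _
    have h4 : algebraMap ℝ R (ε / 2) < algebraMap ℝ R ε := algebraMap_real_strictMono (by linarith)
    linarith

lemma Infinitesimal.add {x y : R} (hx : Infinitesimal R x) (hy : Infinitesimal R y) :
    Infinitesimal R (x + y) := by
  intro c hc
  have h1 := hx (c / 2) (by linarith)
  have h2 := hy (c / 2) (by linarith)
  have h3 : algebraMap ℝ R (c / 2) + algebraMap ℝ R (c / 2) = algebraMap ℝ R c := by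
    rw [← map_add]; norm_num
  calc |x + y| ≤ |x| + |y| := abs_add_le _ _
    _ < algebraMap ℝ R c := by linarith

lemma inf_of_abs_le {x y : R} (h : |x| ≤ |y|) (hy : Infinitesimal R y) : Infinitesimal R x :=
  fun c hc => lt_of_le_of_lt h (hy c hc)

lemma Infinitesimal.mul_bdd {x y : R} (hx : Infinitesimal R x) (k : ℝ)
    (hk : |y| ≤ algebraMap ℝ R k) : Infinitesimal R (x * y) := by
  intro c hc
  set k' := max k 1 with hk'
  have hk'pos : (0:ℝ) < k' := lt_of_lt_of_le one_pos (le_max_right _ _)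
  have hyk : |y| ≤ algebraMap ℝ R k' := le_trans hk (algebraMap_real_mono R (le_max_left _ _))
  have h1 := hx (c / k') (by positivity)
  have h2 : |x| * |y| ≤ |x| * algebraMap ℝ R k' := mul_le_mul_of_nonneg_left hyk (abs_nonneg x)
  have h3 : |x| * algebraMap ℝ R k' < algebraMap ℝ R (c / k') * algebraMap ℝ R k' := by
    apply mul_lt_mul_of_pos_right h1
    have := algebraMap_real_strictMono (R := R) hk'pos
    simpa using this
  have h4 : algebraMap ℝ R (c / k') * algebraMap ℝ R k' = algebraMap ℝ R c := by
    rw [← map_mul]; congr 1; field_simp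
  rw [abs_mul]
  linarith

lemma Infinitesimal.sq {x : R} (hx : Infinitesimal R x) : Infinitesimal R (x ^ 2) := by
  have h1 : |x| ≤ algebraMap ℝ R 1 := (hx 1 one_pos).le
  have h2 := hx.mul_bdd 1 h1
  intro c hc
  have h := h2 c hc
  simpa [pow_two] using h

lemma inf_of_sq {x : R} (hx : Infinitesimal R (x ^ 2)) : Infinitesimal R x := by
  intro c hc
  by_contra h
  push_neg at h
  have hc' : (0:R) < algebraMap ℝ R c := by
    have := algebraMap_real_strictMono (R := R) hc; simpa using this
  have h2 : algebraMap ℝ R (c ^ 2) ≤ |x ^ 2| := by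
    have : algebraMap ℝ R c * algebraMap ℝ R c ≤ |x| * |x| :=
      mul_le_mul h h hc'.le (abs_nonneg x)
    rw [abs_pow]
    calc algebraMap ℝ R (c ^ 2) = algebraMap ℝ R c * algebraMap ℝ R c := by
          rw [← map_mul]; ring_nf
      _ ≤ |x| * |x| := this
      _ = |x| ^ 2 := (sq |x|).symm
  exact absurd (hx (c ^ 2) (by positivity)) (not_lt.mpr h2)

lemma inf_max {x y : R} (hx : Infinitesimal R x) (hy : Infinitesimal R y) :
    Infinitesimal R (max x y) := by
  intro c hc
  rcases max_cases x y with ⟨h, _⟩ | ⟨h, _⟩ <;> rw [h]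
  · exact hx c hc
  · exact hy c hc

lemma sq_lt_of_abs_lt {x : R} {c : ℝ} (h : |x| < algebraMap ℝ R c) :
    x ^ 2 < algebraMap ℝ R (c ^ 2) := by
  have h0 : (0:R) ≤ |x| := abs_nonneg x
  have := mul_self_lt_mul_self h0 h
  calc x ^ 2 = |x| * |x| := by rw [← sq_abs x]; ring
    _ < algebraMap ℝ R c * algebraMap ℝ R c := this
    _ = algebraMap ℝ R (c ^ 2) := by rw [← map_mul]; ring_nf

end AuxR

section RepC
variable (R : Type) [Field R] [LinearOrder R] [IsStrictOrderedRing R] [Algebra ℝ R]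
variable (i' : AlgebraicClosure R) (hi' : i' * i' = -1)

local notation "jj" => algebraMap R (AlgebraicClosure R)
local notation "BB" => boundedSubringC R i' hi'

lemma exists_rep (z : BB) :
    ∃ p : R × R, p.1 ∈ boundedSubalgebra R ∧ p.2 ∈ boundedSubalgebra R ∧
      (z : AlgebraicClosure R) = jj p.1 + jj p.2 * i' := by
  obtain ⟨a, b, ha, hb, h⟩ := z.2
  exact ⟨(a, b), ha, hb, h⟩

noncomputable def reB (z : BB) : R := (exists_rep R i' hi' z).choose.1
noncomputable def imB (z : BB) : R := (exists_rep R i' hi' z).choose.2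

lemma reB_mem (z : BB) : reB R i' hi' z ∈ boundedSubalgebra R :=
  (exists_rep R i' hi' z).choose_spec.1
lemma imB_mem (z : BB) : imB R i' hi' z ∈ boundedSubalgebra R :=
  (exists_rep R i' hi' z).choose_spec.2.1
lemma rep_spec (z : BB) :
    (z : AlgebraicClosure R) = jj (reB R i' hi' z) + jj (imB R i' hi' z) * i' :=
  (exists_rep R i' hi' z).choose_spec.2.2

variable {R}

include hi' in
lemma rep_zero {x y : R} (h : jj x + jj y * i' = 0) : x = 0 ∧ y = 0 := by
  have hinj : Function.Injective (jj) := (algebraMap R (AlgebraicClosure R)).injective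
  by_cases hy : y = 0
  · subst hy
    refine ⟨?_, rfl⟩
    have h1 : jj x = 0 := by simpa using h
    exact hinj (by simpa using h1)
  · exfalso
    have hyy : jj y ≠ 0 := fun hc => hy (hinj (by simpa using hc))
    set q : R := -x / y with hq
    have hqq : jj q = i' := by
      rw [hq, map_div₀, map_neg, eq_comm, eq_div_iff hyy]
      linear_combination h
    have h5 : q * q = -1 := by
      apply hinj
      rw [map_mul, hqq, hi']
      simp
    nlinarith [mul_self_nonneg q]

include hi' in
lemma rep_unique {x y u v : R} (h : jj x + jj y * i' = jj u + jj v * i') : x = u ∧ y = v := by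
  have h0 : jj (x - u) + jj (y - v) * i' = 0 := by
    rw [map_sub, map_sub]; linear_combination h
  obtain ⟨h1, h2⟩ := rep_zero i' hi' h0
  exact ⟨sub_eq_zero.mp h1, sub_eq_zero.mp h2⟩

variable {i' hi'} in
lemma re_im_eq {z : BB} {x y : R} (h : (z : AlgebraicClosure R) = jj x + jj y * i') :
    reB R i' hi' z = x ∧ imB R i' hi' z = y :=
  rep_unique i' hi' ((rep_spec R i' hi' z).symm.trans h)

lemma reim_add (z w : BB) : reB R i' hi' (z + w) = reB R i' hi' z + reB R i' hi' w ∧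
    imB R i' hi' (z + w) = imB R i' hi' z + imB R i' hi' w := by
  apply re_im_eq
  push_cast
  rw [rep_spec R i' hi' z, rep_spec R i' hi' w]
  push_cast
  ring

lemma reim_neg (z : BB) : reB R i' hi' (-z) = -reB R i' hi' z ∧
    imB R i' hi' (-z) = -imB R i' hi' z := by
  apply re_im_eq
  push_cast
  rw [rep_spec R i' hi' z]
  push_cast
  ring

lemma reim_sub (z w : BB) : reB R i' hi' (z - w) = reB R i' hi' z - reB R i' hi' w ∧
    imB R i' hi' (z - w) = imB R i' hi' z - imB R i' hi' w := by
  apply re_im_eq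
  push_cast
  rw [rep_spec R i' hi' z, rep_spec R i' hi' w]
  push_cast
  ring

lemma reim_mul (z w : BB) :
    reB R i' hi' (z * w) = reB R i' hi' z * reB R i' hi' w - imB R i' hi' z * imB R i' hi' w ∧
    imB R i' hi' (z * w) = reB R i' hi' z * imB R i' hi' w + imB R i' hi' z * reB R i' hi' w := by
  apply re_im_eq
  push_cast
  rw [rep_spec R i' hi' z, rep_spec R i' hi' w]
  push_cast
  linear_combination (algebraMap R (AlgebraicClosure R) (imB R i' hi' z) *
    algebraMap R (AlgebraicClosure R) (imB R i' hi' w)) * hi'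

lemma reim_zero : reB R i' hi' 0 = 0 ∧ imB R i' hi' 0 = 0 := by
  apply re_im_eq
  push_cast
  simp

lemma reim_one : reB R i' hi' 1 = 1 ∧ imB R i' hi' 1 = 0 := by
  apply re_im_eq
  push_cast
  simp

end RepC

section NfC
variable (R : Type) [Field R] [LinearOrder R] [IsStrictOrderedRing R] [Algebra ℝ R]
variable (i' : AlgebraicClosure R) (hi' : i' * i' = -1)

local notation "BB" => boundedSubringC R i' hi'

noncomputable def nfB (z : BB) : R := reB R i' hi' z ^ 2 + imB R i' hi' z ^ 2

lemma nfB_nonneg (z : BB) : 0 ≤ nfB R i' hi' z := by unfold nfB; positivity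

lemma nfB_mul (z w : BB) : nfB R i' hi' (z * w) = nfB R i' hi' z * nfB R i' hi' w := by
  obtain ⟨h1, h2⟩ := reim_mul i' hi' z w
  unfold nfB
  rw [h1, h2]
  ring

lemma nfB_one : nfB R i' hi' 1 = 1 := by
  unfold nfB
  rw [(reim_one i' hi').1, (reim_one i' hi').2]
  ring

lemma nfB_pow (z : BB) (n : ℕ) : nfB R i' hi' (z ^ n) = nfB R i' hi' z ^ n := by
  induction n with
  | zero => simpa using nfB_one R i' hi'
  | succ n ih => rw [pow_succ, pow_succ, nfB_mul, ih]

lemma nfB_eq_zero {z : BB} (h : nfB R i' hi' z = 0) : z = 0 := by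
  have h1 : reB R i' hi' z = 0 ∧ imB R i' hi' z = 0 := by
    unfold nfB at h
    constructor <;> nlinarith [sq_nonneg (reB R i' hi' z), sq_nonneg (imB R i' hi' z)]
  have h2 : (z : AlgebraicClosure R) = 0 := by
    rw [rep_spec R i' hi' z, h1.1, h1.2]
    simp
  exact Subtype.ext (by simpa using h2)

lemma mem_bounded_iff {x : R} : x ∈ boundedSubalgebra R ↔ ∃ c : ℝ, |x| ≤ algebraMap ℝ R c :=
  Iff.rfl

lemma nfB_bound (z : BB) : ∃ c : ℝ, 0 ≤ c ∧ nfB R i' hi' z ≤ algebraMap ℝ R c := by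
  obtain ⟨c1, hc1⟩ := (mem_bounded_iff R).mp (reB_mem R i' hi' z)
  obtain ⟨c2, hc2⟩ := (mem_bounded_iff R).mp (imB_mem R i' hi' z)
  have hc1' : (0:ℝ) ≤ c1 := by
    by_contra h
    push_neg at h
    have h2 : algebraMap ℝ R c1 < algebraMap ℝ R 0 := algebraMap_real_strictMono h
    rw [map_zero] at h2
    have := le_trans (abs_nonneg (reB R i' hi' z)) hc1
    linarith
  have hc2' : (0:ℝ) ≤ c2 := by
    by_contra h
    push_neg at h
    have h2 : algebraMap ℝ R c2 < algebraMap ℝ R 0 := algebraMap_real_strictMono h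
    rw [map_zero] at h2
    have := le_trans (abs_nonneg (imB R i' hi' z)) hc2
    linarith
  refine ⟨c1 ^ 2 + c2 ^ 2, by positivity, ?_⟩
  have h1 : reB R i' hi' z ^ 2 ≤ algebraMap ℝ R (c1 ^ 2) := by
    rw [← sq_abs, map_pow]
    exact pow_le_pow_left₀ (abs_nonneg _) hc1 2
  have h2 : imB R i' hi' z ^ 2 ≤ algebraMap ℝ R (c2 ^ 2) := by
    rw [← sq_abs, map_pow]
    exact pow_le_pow_left₀ (abs_nonneg _) hc2 2
  unfold nfB
  rw [map_add]
  exact add_le_add h1 h2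

noncomputable def nfBound (z : BB) : ℝ := (nfB_bound R i' hi' z).choose

lemma nfBound_nonneg (z : BB) : 0 ≤ nfBound R i' hi' z :=
  (nfB_bound R i' hi' z).choose_spec.1

lemma nfB_le_nfBound (z : BB) : nfB R i' hi' z ≤ algebraMap ℝ R (nfBound R i' hi' z) :=
  (nfB_bound R i' hi' z).choose_spec.2

noncomputable def reHom : BB →+ R where
  toFun := reB R i' hi'
  map_zero' := (reim_zero i' hi').1
  map_add' := fun z w => (reim_add i' hi' z w).1

noncomputable def imHom : BB →+ R where
  toFun := imB R i' hi'
  map_zero' := (reim_zero i' hi').2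
  map_add' := fun z w => (reim_add i' hi' z w).2

lemma nfB_sum_le {ι : Type*} (s : Finset ι) (z : ι → BB) :
    nfB R i' hi' (∑ d ∈ s, z d) ≤ (s.card : R) * ∑ d ∈ s, nfB R i' hi' (z d) := by
  have hre : reB R i' hi' (∑ d ∈ s, z d) = ∑ d ∈ s, reB R i' hi' (z d) :=
    map_sum (reHom R i' hi') z s
  have him : imB R i' hi' (∑ d ∈ s, z d) = ∑ d ∈ s, imB R i' hi' (z d) :=
    map_sum (imHom R i' hi') z s
  unfold nfB
  rw [hre, him]
  have h1 := sq_sum_le_card_mul_sum_sq (s := s) (f := fun d => reB R i' hi' (z d))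
  have h2 := sq_sum_le_card_mul_sum_sq (s := s) (f := fun d => imB R i' hi' (z d))
  calc (∑ d ∈ s, reB R i' hi' (z d)) ^ 2 + (∑ d ∈ s, imB R i' hi' (z d)) ^ 2
      ≤ (s.card : R) * (∑ d ∈ s, reB R i' hi' (z d) ^ 2)
        + (s.card : R) * (∑ d ∈ s, imB R i' hi' (z d) ^ 2) := add_le_add h1 h2
    _ = (s.card : R) * ∑ d ∈ s, (reB R i' hi' (z d) ^ 2 + imB R i' hi' (z d) ^ 2) := by
        rw [Finset.sum_add_distrib]; ring

lemma nfB_sub_le (u v : BB) : nfB R i' hi' (u - v) ≤ 2 * (nfB R i' hi' u + nfB R i' hi' v) := by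
  obtain ⟨h1, h2⟩ := reim_sub i' hi' u v
  unfold nfB
  rw [h1, h2]
  nlinarith [sq_nonneg (reB R i' hi' u + reB R i' hi' v), sq_nonneg (imB R i' hi' u + imB R i' hi' v)]

end NfC

section PiC
variable (R : Type) [Field R] [LinearOrder R] [IsStrictOrderedRing R] [Algebra ℝ R]
variable (i' : AlgebraicClosure R) (hi' : i' * i' = -1)

local notation "jj" => algebraMap R (AlgebraicClosure R)
local notation "BB" => boundedSubringC R i' hi'

/-- The element of `B'` with underlying value `jj x`, for bounded `x`. -/
noncomputable def elemR (x : R) (hx : x ∈ boundedSubalgebra R) : BB :=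
  ⟨jj x, ⟨x, 0, hx, zero_mem _, by simp⟩⟩

/-- `√-1` as an element of `B'`. -/
noncomputable def elemI : BB :=
  ⟨i', ⟨0, 1, zero_mem _, one_mem _, by simp⟩⟩

lemma decomp (z : BB) :
    z = elemR R i' hi' (reB R i' hi' z) (reB_mem R i' hi' z)
        + elemR R i' hi' (imB R i' hi' z) (imB_mem R i' hi' z) * elemI R i' hi' := by
  apply Subtype.ext
  push_cast
  rw [rep_spec R i' hi' z]
  rfl

lemma elemI_sq : elemI R i' hi' * elemI R i' hi' = -1 := by
  apply Subtype.ext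
  push_cast
  exact hi'

variable {R i' hi'}

lemma pi_inf_zero (π' : BB →+* ℂ)
    (hπ'0 : ∀ z : BB, (∃ a : R, Infinitesimal R a ∧
      (z : AlgebraicClosure R) = jj a) → π' z = 0)
    {z : BB} (hre : Infinitesimal R (reB R i' hi' z)) (him : Infinitesimal R (imB R i' hi' z)) :
    π' z = 0 := by
  rw [decomp R i' hi' z, map_add, map_mul,
    hπ'0 _ ⟨reB R i' hi' z, hre, rfl⟩, hπ'0 _ ⟨imB R i' hi' z, him, rfl⟩]
  ring

lemma pi_zero_inf (π' : BB →+* ℂ)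
    (hπ'1 : ∀ c : ℝ, π' (realToBc R i' hi' c) = (c : ℂ))
    (hπ'0 : ∀ z : BB, (∃ a : R, Infinitesimal R a ∧
      (z : AlgebraicClosure R) = jj a) → π' z = 0)
    {z : BB} (h : π' z = 0) :
    Infinitesimal R (reB R i' hi' z) ∧ Infinitesimal R (imB R i' hi' z) := by
  obtain ⟨c1, hc1⟩ := (mem_bounded_iff R).mp (reB_mem R i' hi' z)
  obtain ⟨c2, hc2⟩ := (mem_bounded_iff R).mp (imB_mem R i' hi' z)
  obtain ⟨s, hs⟩ := exists_standardPart c1 hc1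
  obtain ⟨t, ht⟩ := exists_standardPart c2 hc2
  set xe := elemR R i' hi' (reB R i' hi' z) (reB_mem R i' hi' z) with hxe
  set ye := elemR R i' hi' (imB R i' hi' z) (imB_mem R i' hi' z) with hye
  have hπx : π' xe = (s : ℂ) := by
    have hd : xe = realToBc R i' hi' s + (xe - realToBc R i' hi' s) := by ring
    have hz0 : π' (xe - realToBc R i' hi' s) = 0 := by
      apply hπ'0
      refine ⟨reB R i' hi' z - algebraMap ℝ R s, hs, ?_⟩
      push_cast
      rfl
    rw [hd, map_add, hπ'1 s, hz0, add_zero]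
  have hπy : π' ye = (t : ℂ) := by
    have hd : ye = realToBc R i' hi' t + (ye - realToBc R i' hi' t) := by ring
    have hz0 : π' (ye - realToBc R i' hi' t) = 0 := by
      apply hπ'0
      refine ⟨imB R i' hi' z - algebraMap ℝ R t, ht, ?_⟩
      push_cast
      rfl
    rw [hd, map_add, hπ'1 t, hz0, add_zero]
  set ι := π' (elemI R i' hi') with hι
  have hι2 : ι * ι = -1 := by
    rw [hι, ← map_mul, elemI_sq, map_neg, map_one]
  have hπz : (s : ℂ) + (t : ℂ) * ι = 0 := by
    rw [← hπx, ← hπy, hι, ← map_mul, ← map_add, ← decomp R i' hi' z, h]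
  have hιim : ι.im ≠ 0 := by
    intro h0
    have h1 : ι = (ι.re : ℂ) := Complex.ext rfl (by simp [h0])
    rw [h1, ← Complex.ofReal_mul] at hι2
    have := congrArg Complex.re hι2
    simp at this
    nlinarith [mul_self_nonneg ι.re]
  have ht0 : t = 0 := by
    have h2 := congrArg Complex.im hπz
    simp [Complex.add_im, Complex.mul_im] at h2
    rcases h2 with h2 | h2
    · exact h2
    · exact absurd h2 hιim
  have hs0 : s = 0 := by
    rw [ht0] at hπz
    simp at hπz
    exact hπz
  constructor
  · rw [hs0] at hs
    simpa using hs
  · rw [ht0] at ht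
    simpa using ht

end PiC

section PolyAux

open MvPolynomial

lemma constantCoeff_pderiv {σ : Type*} [DecidableEq σ] {S : Type*} [CommSemiring S]
    (i : σ) (p : MvPolynomial σ S) :
    constantCoeff (pderiv i p) = p.coeff (Finsupp.single i 1) := by
  induction p using MvPolynomial.induction_on' with
  | monomial d c =>
    rw [pderiv_monomial, constantCoeff_monomial, coeff_monomial]
    by_cases h : d = Finsupp.single i 1
    · subst h
      simp
    · rw [if_neg h]
      by_cases h2 : d - Finsupp.single i 1 = 0
      · rw [if_pos h2]
        have hdi : d i ≤ 1 := by
          have := DFunLike.congr_fun h2 i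
          simp only [Finsupp.coe_tsub, Pi.sub_apply, Finsupp.single_eq_same,
            Finsupp.coe_zero, Pi.zero_apply] at this
          omega
        rcases Nat.lt_or_ge (d i) 1 with hd0 | hd1
        · have : d i = 0 := by omega
          rw [this]
          simp
        · exfalso
          apply h
          ext j
          by_cases hj : j = i
          · subst hj
            simp only [Finsupp.single_eq_same]
            omega
          · have := DFunLike.congr_fun h2 j
            simp only [Finsupp.coe_tsub, Pi.sub_apply, Finsupp.coe_zero, Pi.zero_apply,
              Finsupp.single_eq_of_ne hj] at this ⊢
            omega
      · rw [if_neg h2]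
  | add p q hp hq =>
    rw [map_add, map_add, coeff_add, hp, hq]

lemma pow_mul_le {R : Type*} [CommRing R] [LinearOrder R] [IsStrictOrderedRing R] {x y m : R}
    (hx0 : 0 ≤ x) (hx1 : x ≤ 1) (hy0 : 0 ≤ y) (hy1 : y ≤ 1)
    (hxm : x ≤ m) (hym : y ≤ m) {i j : ℕ} (hij : 2 ≤ i + j) :
    x ^ i * y ^ j ≤ m ^ 2 := by
  have hm0 : 0 ≤ m := le_trans hx0 hxm
  rcases i with _ | _ | i
  · have hj : 2 ≤ j := by omega
    have h1 : y ^ j ≤ y ^ 2 := pow_le_pow_of_le_one hy0 hy1 hj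
    have h2 : y ^ 2 ≤ m ^ 2 := pow_le_pow_left₀ hy0 hym 2
    simpa using le_trans h1 h2
  · have hj : 1 ≤ j := by omega
    have h1 : y ^ j ≤ y := by simpa using pow_le_pow_of_le_one hy0 hy1 hj
    calc x ^ 1 * y ^ j ≤ m * m := by
          rw [pow_one]
          exact mul_le_mul hxm (le_trans h1 hym) (pow_nonneg hy0 j) hm0
      _ = m ^ 2 := (sq m).symm
  · have h1 : x ^ (i + 2) ≤ x ^ 2 := pow_le_pow_of_le_one hx0 hx1 (by omega)
    have h2 : y ^ j ≤ 1 := pow_le_one₀ hy0 hy1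
    calc x ^ (i + 2) * y ^ j ≤ x ^ 2 * 1 :=
          mul_le_mul h1 h2 (pow_nonneg hy0 j) (pow_nonneg hx0 2)
      _ = x ^ 2 := mul_one _
      _ ≤ m ^ 2 := pow_le_pow_left₀ hx0 hxm 2

lemma taylor_two {S : Type*} [CommRing S] (p : MvPolynomial (Fin 2) S) (a b : S) :
    eval ![a, b] p =
      eval (fun _ => (0 : S)) p
      + eval (fun _ => (0 : S)) (pderiv 0 p) * a
      + eval (fun _ => (0 : S)) (pderiv 1 p) * b
      + ∑ d ∈ p.support.filter (fun d => 2 ≤ d 0 + d 1),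
          p.coeff d * (a ^ d 0 * b ^ d 1) := by
  classical
  have h0 : eval (fun _ => (0 : S)) p = p.coeff 0 := by
    rw [eval_zero', constantCoeff_eq]
  have h1 : ∀ i : Fin 2, eval (fun _ => (0 : S)) (pderiv i p) = p.coeff (Finsupp.single i 1) := by
    intro i
    rw [eval_zero']
    exact constantCoeff_pderiv i p
  rw [h0, h1 0, h1 1, eval_eq']
  have hprod : ∀ d : Fin 2 →₀ ℕ, (∏ i, (![a, b] : Fin 2 → S) i ^ d i) = a ^ d 0 * b ^ d 1 := by
    intro d
    rw [Fin.prod_univ_two]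
    simp
  have hsplit := Finset.sum_filter_add_sum_filter_not p.support (fun d => d 0 + d 1 ≤ 1)
    (fun d => p.coeff d * (a ^ d 0 * b ^ d 1))
  have hfilter : p.support.filter (fun d => ¬ (d 0 + d 1 ≤ 1))
      = p.support.filter (fun d => 2 ≤ d 0 + d 1) := by
    apply Finset.filter_congr
    intro d _
    constructor <;> intro hh <;> omega
  have hlow : ∑ d ∈ p.support.filter (fun d => d 0 + d 1 ≤ 1),
      p.coeff d * (a ^ d 0 * b ^ d 1)
      = p.coeff 0 + p.coeff (Finsupp.single 0 1) * a + p.coeff (Finsupp.single 1 1) * b := by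
    have hne1 : (0 : Fin 2 →₀ ℕ) ≠ Finsupp.single 0 1 := by
      intro h
      have := DFunLike.congr_fun h 0
      simp at this
    have hne2 : (0 : Fin 2 →₀ ℕ) ≠ Finsupp.single 1 1 := by
      intro h
      have := DFunLike.congr_fun h 1
      simp at this
    have hne3 : (Finsupp.single 0 1 : Fin 2 →₀ ℕ) ≠ Finsupp.single 1 1 := by
      intro h
      have := DFunLike.congr_fun h 0
      simp at this
    have hsub : p.support.filter (fun d => d 0 + d 1 ≤ 1)
        ⊆ {0, Finsupp.single 0 1, Finsupp.single 1 1} := by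
      intro d hd
      simp only [Finset.mem_filter] at hd
      have hcase : (d 0 = 0 ∧ d 1 = 0) ∨ (d 0 = 1 ∧ d 1 = 0) ∨ (d 0 = 0 ∧ d 1 = 1) := by
        omega
      simp only [Finset.mem_insert, Finset.mem_singleton]
      rcases hcase with ⟨ha0, hb0⟩ | ⟨ha0, hb0⟩ | ⟨ha0, hb0⟩
      · left
        ext j
        fin_cases j <;> simp [ha0, hb0]
      · right; left
        ext j
        fin_cases j <;> simp [ha0, hb0, Finsupp.single_apply]
      · right; right
        ext j
        fin_cases j <;> simp [ha0, hb0, Finsupp.single_apply]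
    rw [Finset.sum_subset hsub]
    · rw [Finset.sum_insert (by simp [hne1, hne2]), Finset.sum_insert (by simp [hne3]),
        Finset.sum_singleton]
      simp [Finsupp.single_apply]
      ring
    · intro d hd hnd
      have hdeg : d 0 + d 1 ≤ 1 := by
        simp only [Finset.mem_insert, Finset.mem_singleton] at hd
        rcases hd with rfl | rfl | rfl <;> simp [Finsupp.single_apply]
      have : d ∉ p.support := fun hc => hnd (Finset.mem_filter.mpr ⟨hc, hdeg⟩)
      rw [MvPolynomial.notMem_support_iff.mp this, zero_mul]
  simp_rw [hprod]
  rw [← hsplit, hfilter, hlow]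

end PolyAux

section RemBound
open MvPolynomial

variable (R : Type) [Field R] [LinearOrder R] [IsStrictOrderedRing R] [Algebra ℝ R]
variable (i' : AlgebraicClosure R) (hi' : i' * i' = -1)

local notation "BB" => boundedSubringC R i' hi'

lemma remainder_bound (p : MvPolynomial (Fin 2) BB) (a b : BB)
    (ha1 : nfB R i' hi' a ≤ 1) (hb1 : nfB R i' hi' b ≤ 1) :
    ∃ K : ℝ, 0 ≤ K ∧
      nfB R i' hi' (∑ d ∈ p.support.filter (fun d => 2 ≤ d 0 + d 1),
          p.coeff d * (a ^ d 0 * b ^ d 1))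
        ≤ algebraMap ℝ R K * (max (nfB R i' hi' a) (nfB R i' hi' b)) ^ 2 := by
  classical
  set D := p.support.filter (fun d => 2 ≤ d 0 + d 1) with hD
  set m := max (nfB R i' hi' a) (nfB R i' hi' b) with hm
  refine ⟨D.card * ∑ d ∈ D, nfBound R i' hi' (p.coeff d),
    mul_nonneg (Nat.cast_nonneg _)
      (Finset.sum_nonneg fun d _ => nfBound_nonneg R i' hi' (p.coeff d)), ?_⟩
  calc nfB R i' hi' (∑ d ∈ D, p.coeff d * (a ^ d 0 * b ^ d 1))
      ≤ (D.card : R) * ∑ d ∈ D, nfB R i' hi' (p.coeff d * (a ^ d 0 * b ^ d 1)) :=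
        nfB_sum_le R i' hi' D _
    _ ≤ (D.card : R) * ∑ d ∈ D, algebraMap ℝ R (nfBound R i' hi' (p.coeff d)) * m ^ 2 := by
        apply mul_le_mul_of_nonneg_left (Finset.sum_le_sum ?_) (Nat.cast_nonneg _)
        intro d hd
        have hdd : 2 ≤ d 0 + d 1 := (Finset.mem_filter.mp hd).2
        have heq : nfB R i' hi' (p.coeff d * (a ^ d 0 * b ^ d 1))
            = nfB R i' hi' (p.coeff d) * (nfB R i' hi' a ^ d 0 * nfB R i' hi' b ^ d 1) := by
          rw [nfB_mul, nfB_mul, nfB_pow, nfB_pow]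
        rw [heq]
        apply mul_le_mul (nfB_le_nfBound R i' hi' _)
          (pow_mul_le (nfB_nonneg R i' hi' a) ha1 (nfB_nonneg R i' hi' b) hb1
            (le_max_left _ _) (le_max_right _ _) hdd)
          (mul_nonneg (pow_nonneg (nfB_nonneg R i' hi' a) _)
            (pow_nonneg (nfB_nonneg R i' hi' b) _))
          (jmap_nonneg (nfBound_nonneg R i' hi' _))
    _ = algebraMap ℝ R (D.card * ∑ d ∈ D, nfBound R i' hi' (p.coeff d)) * m ^ 2 := by
        rw [← Finset.sum_mul, map_mul, map_natCast, map_sum]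
        ring

end RemBound

section Extra
variable (R : Type) [Field R] [LinearOrder R] [IsStrictOrderedRing R] [Algebra ℝ R]

lemma two_mul_j (A B : ℝ) :
    2 * (algebraMap ℝ R A + algebraMap ℝ R B) = algebraMap ℝ R (2 * (A + B)) := by
  rw [map_mul, map_add, map_ofNat]

end Extra

set_option maxHeartbeats 1000000 in
open MvPolynomial in
/-- **Lemma.** Let `f, g ∈ B'[x,y]` with coefficientwise reductions `f̄, ḡ ∈ ℂ[x,y]` not
identically zero (`π' : B' → B'/m' = ℂ` being the residue map).  Assume
`f(0,0) = g(0,0) = 0` and that the curves `f̄ = 0` and `ḡ = 0` intersect transversally at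
`(0,0)` (independence of gradients).  Then `f = 0` and `g = 0` intersect transversally at
`(0,0)` in `R'²`, and they have no common zero `(a,b) ≠ (0,0)` with `a, b ∈ m'`. -/
theorem plane_curves_transversal_of_reduction_transversal
    (R : Type) [Field R] [LinearOrder R] [IsStrictOrderedRing R] [IsRealClosedField R] [Algebra ℝ R]
    (i' : AlgebraicClosure R) (hi' : i' * i' = -1)
    (π' : ↥(boundedSubringC R i' hi') →+* ℂ)
    (hπ'1 : ∀ c : ℝ, π' (realToBc R i' hi' c) = (c : ℂ))
    (hπ'0 : ∀ z : ↥(boundedSubringC R i' hi'),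
      (∃ (a : R), Infinitesimal R a ∧
        (z : AlgebraicClosure R) = algebraMap R (AlgebraicClosure R) a) → π' z = 0)
    (f g : MvPolynomial (Fin 2) ↥(boundedSubringC R i' hi'))
    (hfbar : MvPolynomial.map π' f ≠ 0) (hgbar : MvPolynomial.map π' g ≠ 0)
    (hf0 : eval (fun _ => (0 : ↥(boundedSubringC R i' hi'))) f = 0)
    (hg0 : eval (fun _ => (0 : ↥(boundedSubringC R i' hi'))) g = 0)
    (htrans :
      eval (fun _ => (0:ℂ)) (pderiv 0 (MvPolynomial.map π' f)) *
          eval (fun _ => (0:ℂ)) (pderiv 1 (MvPolynomial.map π' g)) -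
        eval (fun _ => (0:ℂ)) (pderiv 1 (MvPolynomial.map π' f)) *
          eval (fun _ => (0:ℂ)) (pderiv 0 (MvPolynomial.map π' g)) ≠ 0) :
    (eval (fun _ => (0 : ↥(boundedSubringC R i' hi'))) (pderiv 0 f) *
        eval (fun _ => (0 : ↥(boundedSubringC R i' hi'))) (pderiv 1 g) -
      eval (fun _ => (0 : ↥(boundedSubringC R i' hi'))) (pderiv 1 f) *
        eval (fun _ => (0 : ↥(boundedSubringC R i' hi'))) (pderiv 0 g) ≠ 0) ∧
    ∀ a b : ↥(boundedSubringC R i' hi'), π' a = 0 → π' b = 0 → ¬(a = 0 ∧ b = 0) →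
      ¬(eval ![a, b] f = 0 ∧ eval ![a, b] g = 0) := by
  classical
  set fx := eval (fun _ => (0 : ↥(boundedSubringC R i' hi'))) (pderiv 0 f) with hfx
  set fy := eval (fun _ => (0 : ↥(boundedSubringC R i' hi'))) (pderiv 1 f) with hfy
  set gx := eval (fun _ => (0 : ↥(boundedSubringC R i' hi'))) (pderiv 0 g) with hgx
  set gy := eval (fun _ => (0 : ↥(boundedSubringC R i' hi'))) (pderiv 1 g) with hgy
  have hevalmap : ∀ p : MvPolynomial (Fin 2) ↥(boundedSubringC R i' hi'),
      π' (eval (fun _ => 0) p) = eval (fun _ => (0:ℂ)) (MvPolynomial.map π' p) := by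
    intro p
    rw [eval_map]
    have h := eval₂_comp_left π' (RingHom.id ↥(boundedSubringC R i' hi'))
      (fun _ => (0 : ↥(boundedSubringC R i' hi'))) p
    simpa [Function.comp] using h
  have hpd : ∀ (p : MvPolynomial (Fin 2) ↥(boundedSubringC R i' hi')) (i : Fin 2),
      π' (eval (fun _ => 0) (pderiv i p))
        = eval (fun _ => (0:ℂ)) (pderiv i (MvPolynomial.map π' p)) := by
    intro p i
    rw [pderiv_map, ← hevalmap]
  set D := fx * gy - fy * gx with hDdef
  have hDπ : π' D =
      eval (fun _ => (0:ℂ)) (pderiv 0 (MvPolynomial.map π' f)) *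
          eval (fun _ => (0:ℂ)) (pderiv 1 (MvPolynomial.map π' g)) -
        eval (fun _ => (0:ℂ)) (pderiv 1 (MvPolynomial.map π' f)) *
          eval (fun _ => (0:ℂ)) (pderiv 0 (MvPolynomial.map π' g)) := by
    rw [hDdef, map_sub, map_mul, map_mul, hfx, hfy, hgx, hgy,
      hpd f 0, hpd g 1, hpd f 1, hpd g 0]
  constructor
  · intro h
    exact htrans (by rw [← hDπ, h, map_zero])
  · rintro a b hπa hπb hne ⟨hfa, hga⟩
    obtain ⟨hra, hia⟩ := pi_zero_inf π' hπ'1 hπ'0 hπa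
    obtain ⟨hrb, hib⟩ := pi_zero_inf π' hπ'1 hπ'0 hπb
    have hNa_inf : Infinitesimal R (nfB R i' hi' a) := by
      have h := (hra.sq).add (hia.sq)
      simpa [nfB] using h
    have hNb_inf : Infinitesimal R (nfB R i' hi' b) := by
      have h := (hrb.sq).add (hib.sq)
      simpa [nfB] using h
    have hle1 : ∀ z : ↥(boundedSubringC R i' hi'),
        Infinitesimal R (reB R i' hi' z) → Infinitesimal R (imB R i' hi' z) →
        nfB R i' hi' z ≤ 1 := by
      intro z hr hi
      have h1 := sq_lt_of_abs_lt (hr (1/2) (by norm_num))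
      have h2 := sq_lt_of_abs_lt (hi (1/2) (by norm_num))
      have h3 : algebraMap ℝ R ((1/2:ℝ)^2) + algebraMap ℝ R ((1/2:ℝ)^2) ≤ 1 := by
        rw [← map_add, show ((1/2:ℝ)^2 + (1/2:ℝ)^2 : ℝ) = 1/2 by norm_num]
        calc algebraMap ℝ R (1/2) ≤ algebraMap ℝ R 1 := algebraMap_real_mono R (by norm_num)
          _ = 1 := map_one _
      have h4 : nfB R i' hi' z = reB R i' hi' z ^ 2 + imB R i' hi' z ^ 2 := rfl
      rw [h4]
      linarith
    have hNa1 : nfB R i' hi' a ≤ 1 := hle1 a hra hia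
    have hNb1 : nfB R i' hi' b ≤ 1 := hle1 b hrb hib
    have Hf : fx * a + fy * b
        = - ∑ d ∈ f.support.filter (fun d => 2 ≤ d 0 + d 1),
            f.coeff d * (a ^ d 0 * b ^ d 1) := by
      have h := taylor_two f a b
      rw [hfa, hf0] at h
      linear_combination -h
    have Hg : gx * a + gy * b
        = - ∑ d ∈ g.support.filter (fun d => 2 ≤ d 0 + d 1),
            g.coeff d * (a ^ d 0 * b ^ d 1) := by
      have h := taylor_two g a b
      rw [hga, hg0] at h
      linear_combination -h
    obtain ⟨Kf, hKf0, hKfb⟩ := remainder_bound R i' hi' f a b hNa1 hNb1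
    obtain ⟨Kg, hKg0, hKgb⟩ := remainder_bound R i' hi' g a b hNa1 hNb1
    set Rf := ∑ d ∈ f.support.filter (fun d => 2 ≤ d 0 + d 1),
        f.coeff d * (a ^ d 0 * b ^ d 1) with hRfdef
    set Rg := ∑ d ∈ g.support.filter (fun d => 2 ≤ d 0 + d 1),
        g.coeff d * (a ^ d 0 * b ^ d 1) with hRgdef
    set m := max (nfB R i' hi' a) (nfB R i' hi' b) with hm
    have hm_inf : Infinitesimal R m := inf_max hNa_inf hNb_inf
    have hm_pos : 0 < m := by
      rcases not_and_or.mp hne with h | h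
      · have h0 : nfB R i' hi' a ≠ 0 := fun hc => h (nfB_eq_zero R i' hi' hc)
        have h1 := lt_of_le_of_ne (nfB_nonneg R i' hi' a) (Ne.symm h0)
        exact lt_of_lt_of_le h1 (le_max_left _ _)
      · have h0 : nfB R i' hi' b ≠ 0 := fun hc => h (nfB_eq_zero R i' hi' hc)
        have h1 := lt_of_le_of_ne (nfB_nonneg R i' hi' b) (Ne.symm h0)
        exact lt_of_lt_of_le h1 (le_max_right _ _)
    have HDa : D * a = fy * Rg - gy * Rf := by
      rw [hDdef]
      linear_combination gy * Hf - fy * Hg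
    have HDb : D * b = gx * Rf - fx * Rg := by
      rw [hDdef]
      linear_combination fx * Hg - gx * Hf
    set kfy := nfBound R i' hi' fy with hkfy
    set kgy := nfBound R i' hi' gy with hkgy
    set kfx := nfBound R i' hi' fx with hkfx
    set kgx := nfBound R i' hi' gx with hkgx
    have hkfy0 := nfBound_nonneg R i' hi' fy
    have hkgy0 := nfBound_nonneg R i' hi' gy
    have hkfx0 := nfBound_nonneg R i' hi' fx
    have hkgx0 := nfBound_nonneg R i' hi' gx
    have key : ∀ (u v : ↥(boundedSubringC R i' hi')) (ku Kv : ℝ), 0 ≤ ku → 0 ≤ Kv →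
        nfB R i' hi' u ≤ algebraMap ℝ R ku →
        nfB R i' hi' v ≤ algebraMap ℝ R Kv * m ^ 2 →
        nfB R i' hi' (u * v) ≤ algebraMap ℝ R (ku * Kv) * m ^ 2 := by
      intro u v ku Kv hku hKv h1 h2
      rw [nfB_mul, map_mul]
      calc nfB R i' hi' u * nfB R i' hi' v
          ≤ algebraMap ℝ R ku * (algebraMap ℝ R Kv * m ^ 2) :=
            mul_le_mul h1 h2 (nfB_nonneg R i' hi' v) (jmap_nonneg hku)
        _ = algebraMap ℝ R ku * algebraMap ℝ R Kv * m ^ 2 := by ring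
    set C1 : ℝ := 2 * (kfy * Kg + kgy * Kf) with hC1
    set C2 : ℝ := 2 * (kgx * Kf + kfx * Kg) with hC2
    set C : ℝ := C1 + C2 with hCdef
    have hC10 : 0 ≤ C1 := by
      have := mul_nonneg hkfy0 hKg0
      have := mul_nonneg hkgy0 hKf0
      rw [hC1]; linarith
    have hC20 : 0 ≤ C2 := by
      have := mul_nonneg hkgx0 hKf0
      have := mul_nonneg hkfx0 hKg0
      rw [hC2]; linarith
    have hC0 : 0 ≤ C := by rw [hCdef]; linarith
    have hm2 : (0:R) ≤ m ^ 2 := sq_nonneg m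
    have hDa2 : nfB R i' hi' D * nfB R i' hi' a ≤ algebraMap ℝ R C * m ^ 2 := by
      rw [← nfB_mul, HDa]
      calc nfB R i' hi' (fy * Rg - gy * Rf)
          ≤ 2 * (nfB R i' hi' (fy * Rg) + nfB R i' hi' (gy * Rf)) :=
            nfB_sub_le R i' hi' _ _
        _ ≤ 2 * (algebraMap ℝ R (kfy * Kg) * m ^ 2 + algebraMap ℝ R (kgy * Kf) * m ^ 2) := by
            have h1 := key fy Rg kfy Kg hkfy0 hKg0 (nfB_le_nfBound R i' hi' fy) hKgb
            have h2 := key gy Rf kgy Kf hkgy0 hKf0 (nfB_le_nfBound R i' hi' gy) hKfb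
            linarith
        _ = algebraMap ℝ R C1 * m ^ 2 := by
            rw [hC1, ← two_mul_j]
            ring
        _ ≤ algebraMap ℝ R C * m ^ 2 := by
            apply mul_le_mul_of_nonneg_right _ hm2
            exact algebraMap_real_mono R (by rw [hCdef]; linarith)
    have hDb2 : nfB R i' hi' D * nfB R i' hi' b ≤ algebraMap ℝ R C * m ^ 2 := by
      rw [← nfB_mul, HDb]
      calc nfB R i' hi' (gx * Rf - fx * Rg)
          ≤ 2 * (nfB R i' hi' (gx * Rf) + nfB R i' hi' (fx * Rg)) :=
            nfB_sub_le R i' hi' _ _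
        _ ≤ 2 * (algebraMap ℝ R (kgx * Kf) * m ^ 2 + algebraMap ℝ R (kfx * Kg) * m ^ 2) := by
            have h1 := key gx Rf kgx Kf hkgx0 hKf0 (nfB_le_nfBound R i' hi' gx) hKfb
            have h2 := key fx Rg kfx Kg hkfx0 hKg0 (nfB_le_nfBound R i' hi' fx) hKgb
            linarith
        _ = algebraMap ℝ R C2 * m ^ 2 := by
            rw [hC2, ← two_mul_j]
            ring
        _ ≤ algebraMap ℝ R C * m ^ 2 := by
            apply mul_le_mul_of_nonneg_right _ hm2
            exact algebraMap_real_mono R (by rw [hCdef]; linarith)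
    have hDm : nfB R i' hi' D * m ≤ algebraMap ℝ R C * m ^ 2 := by
      rcases max_cases (nfB R i' hi' a) (nfB R i' hi' b) with ⟨hmax, _⟩ | ⟨hmax, _⟩
      · have e : m = nfB R i' hi' a := by rw [hm]; exact hmax
        calc nfB R i' hi' D * m = nfB R i' hi' D * nfB R i' hi' a := by rw [e]
          _ ≤ algebraMap ℝ R C * m ^ 2 := hDa2
      · have e : m = nfB R i' hi' b := by rw [hm]; exact hmax
        calc nfB R i' hi' D * m = nfB R i' hi' D * nfB R i' hi' b := by rw [e]
          _ ≤ algebraMap ℝ R C * m ^ 2 := hDb2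
    have hD_le : nfB R i' hi' D ≤ algebraMap ℝ R C * m := by
      have h1 : nfB R i' hi' D * m ≤ (algebraMap ℝ R C * m) * m := by
        calc nfB R i' hi' D * m ≤ algebraMap ℝ R C * m ^ 2 := hDm
          _ = (algebraMap ℝ R C * m) * m := by ring
      exact le_of_mul_le_mul_right h1 hm_pos
    have hCm_inf : Infinitesimal R (algebraMap ℝ R C * m) := by
      have h := hm_inf.mul_bdd C (le_of_eq (abs_of_nonneg (jmap_nonneg hC0)))
      simpa [mul_comm] using h
    have hD_inf : Infinitesimal R (nfB R i' hi' D) := by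
      apply inf_of_abs_le _ hCm_inf
      rw [abs_of_nonneg (nfB_nonneg R i' hi' D),
        abs_of_nonneg (mul_nonneg (jmap_nonneg hC0) hm_pos.le)]
      exact hD_le
    have hnf_eq : nfB R i' hi' D = reB R i' hi' D ^ 2 + imB R i' hi' D ^ 2 := rfl
    have hDre : Infinitesimal R (reB R i' hi' D) := by
      apply inf_of_sq
      apply inf_of_abs_le _ hD_inf
      rw [abs_of_nonneg (sq_nonneg _), abs_of_nonneg (nfB_nonneg R i' hi' D), hnf_eq]
      nlinarith [sq_nonneg (imB R i' hi' D)]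
    have hDim : Infinitesimal R (imB R i' hi' D) := by
      apply inf_of_sq
      apply inf_of_abs_le _ hD_inf
      rw [abs_of_nonneg (sq_nonneg _), abs_of_nonneg (nfB_nonneg R i' hi' D), hnf_eq]
      nlinarith [sq_nonneg (reB R i' hi' D)]
    have hπD : π' D = 0 := pi_inf_zero π' hπ'0 hDre hDim
    exact htrans (by rw [← hDπ]; exact hπD)
end

section
/- Let C be a nonsingular affine curve over ℝ, let K ⊆ C(ℝ) be a compact semialgebraic set, and let T = 𝒫(K) be the saturated preordering of K in ℝ[C]. Then the preordering T_B generated by T in B[C] = ℝ[C] ⊗ B is archimedean; that is, for every f ∈ B[C] there exists a positive real number c with c − f ∈ T_B. -/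
open scoped TensorProduct

section SemialgebraicOnVariety

variable {A : Type} [CommRing A] [Algebra ℝ A]

/-- The semialgebraic subset of `C(ℝ) = Hom_ℝ(A, ℝ)` defined by a finite description `D`
(a finite union of basic sets given by equations and strict inequalities). -/
def saRealization (D : Finset (Finset A × Finset A)) : Set (A →ₐ[ℝ] ℝ) :=
  {ξ | ∃ d ∈ D, (∀ p ∈ d.1, ξ p = 0) ∧ ∀ q ∈ d.2, 0 < ξ q}

/-- The saturated preordering `𝒫(K) = {f ∈ A : f|_K ≥ 0}` of a subset `K ⊆ C(ℝ)`. -/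
def saturatedPreordering (K : Set (A →ₐ[ℝ] ℝ)) : Set A :=
  {f | ∀ ξ ∈ K, 0 ≤ ξ f}

end SemialgebraicOnVariety

/-- The preordering generated by a subset `S` of a commutative ring: the smallest subset
containing `S` and all squares and closed under addition and multiplication. -/
inductive PreorderingGen {A : Type} [CommRing A] (S : Set A) : A → Prop
  | of {a : A} : a ∈ S → PreorderingGen S a
  | sq (a : A) : PreorderingGen S (a * a)
  | add {a b : A} : PreorderingGen S a → PreorderingGen S b → PreorderingGen S (a + b)
  | mul {a b : A} : PreorderingGen S a → PreorderingGen S b → PreorderingGen S (a * b)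


section AuxLemmas

lemma PreorderingGen_algebraMap {A : Type} [CommRing A] [Algebra ℝ A] (S : Set A)
    {c : ℝ} (hc : 0 ≤ c) : PreorderingGen S (algebraMap ℝ A c) := by
  have h : algebraMap ℝ A c = algebraMap ℝ A (Real.sqrt c) * algebraMap ℝ A (Real.sqrt c) := by
    rw [← map_mul, Real.mul_self_sqrt hc]
  rw [h]
  exact PreorderingGen.sq _

lemma mem_boundedSubalgebra_iff (R : Type) [Field R] [LinearOrder R] [IsStrictOrderedRing R] [Algebra ℝ R] (x : R) :
    x ∈ boundedSubalgebra R ↔ ∃ c : ℝ, |x| ≤ algebraMap ℝ R c := Iff.rfl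

/-- Every element of `B` that is nonnegative in `R` is a square in `B`. -/
lemma boundedSubalgebra_exists_sqrt (R : Type) [Field R] [LinearOrder R] [IsStrictOrderedRing R] [IsRealClosedField R]
    [Algebra ℝ R] (x : ↥(boundedSubalgebra R)) (hx : (0 : R) ≤ (x : R)) :
    ∃ y : ↥(boundedSubalgebra R), y * y = x := by
  obtain ⟨y, hy⟩ := IsRealClosedField.exists_sqrt hx
  obtain ⟨c, hc⟩ := (mem_boundedSubalgebra_iff R (x : R)).mp x.2
  set m : ℝ := max c 0 with hm
  have hm0 : 0 ≤ m := le_max_right _ _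
  have hxm : (x : R) ≤ algebraMap ℝ R m := by
    calc (x : R) ≤ |(x : R)| := le_abs_self _
    _ ≤ algebraMap ℝ R c := hc
    _ ≤ algebraMap ℝ R m := algebraMap_real_mono R (le_max_left _ _)
  have hsq : algebraMap ℝ R (Real.sqrt m) * algebraMap ℝ R (Real.sqrt m) = algebraMap ℝ R m := by
    rw [← map_mul, Real.mul_self_sqrt hm0]
  have hs0 : (0 : R) ≤ algebraMap ℝ R (Real.sqrt m) := by
    have := algebraMap_real_mono R (Real.sqrt_nonneg m)
    rwa [map_zero] at this
  have hyb : |y| ≤ algebraMap ℝ R (Real.sqrt m) := by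
    nlinarith [abs_nonneg y, abs_mul_abs_self y]
  refine ⟨⟨y, ⟨Real.sqrt m, hyb⟩⟩, ?_⟩
  exact Subtype.ext hy

end AuxLemmas

set_option maxHeartbeats 2000000 in
set_option synthInstance.maxHeartbeats 800000 in
/-- **Lemma.** Let `C` be a nonsingular affine curve over `ℝ` (coordinate ring `A`), let
`K ⊆ C(ℝ)` be a compact semialgebraic set and `T = 𝒫(K)` its saturated preordering in
`ℝ[C] = A`.  Let `R ⊇ ℝ` be a real closed field and `B` the convex hull of `ℝ` in `R`.
Then the preordering `T_B` generated by `T` in `B[C] = A ⊗_ℝ B` is archimedean: for every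
`f ∈ A ⊗ B` there is a positive real `c` with `c - f ∈ T_B`. -/
theorem preordering_generated_in_bounded_base_extension_isArchimedean
    {A : Type} [CommRing A] [Algebra ℝ A] [Algebra.FiniteType ℝ A]
    [Algebra.FormallySmooth ℝ A] (hdim : ringKrullDim A = 1)
    (D : Finset (Finset A × Finset A))
    (hcpt : IsCompact ((fun ξ : A →ₐ[ℝ] ℝ => (ξ : A → ℝ)) '' saRealization D))
    (R : Type) [Field R] [LinearOrder R] [IsStrictOrderedRing R] [IsRealClosedField R] [Algebra ℝ R] :
    ∀ f : A ⊗[ℝ] ↥(boundedSubalgebra R), ∃ c : ℝ, 0 < c ∧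
      PreorderingGen
        ((fun a => (Algebra.TensorProduct.includeLeft :
            A →ₐ[ℝ] A ⊗[ℝ] ↥(boundedSubalgebra R)) a) ''
          saturatedPreordering (saRealization D))
        (algebraMap ℝ (A ⊗[ℝ] ↥(boundedSubalgebra R)) c - f) := by
  classical
  intro f
  induction f using TensorProduct.induction_on with
  | zero =>
    refine ⟨1, one_pos, ?_⟩
    rw [sub_zero]
    exact PreorderingGen_algebraMap _ zero_le_one
  | add x y hx hy =>
    obtain ⟨c, hc, hcx⟩ := hx
    obtain ⟨d, hd, hdy⟩ := hy
    refine ⟨c + d, by positivity, ?_⟩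
    have h : algebraMap ℝ (A ⊗[ℝ] ↥(boundedSubalgebra R)) (c + d) - (x + y)
        = (algebraMap ℝ (A ⊗[ℝ] ↥(boundedSubalgebra R)) c - x)
          + (algebraMap ℝ (A ⊗[ℝ] ↥(boundedSubalgebra R)) d - y) := by
      rw [map_add]; ring
    rw [h]
    exact hcx.add hdy
  | tmul a b =>
    set S : Set (A ⊗[ℝ] ↥(boundedSubalgebra R)) :=
      ((fun a => (Algebra.TensorProduct.includeLeft :
          A →ₐ[ℝ] A ⊗[ℝ] ↥(boundedSubalgebra R)) a) ''
        saturatedPreordering (saRealization D)) with hS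
    -- bound for `a` on `K`
    have hKa : IsCompact ((fun g : A → ℝ => g a) ''
        ((fun ξ : A →ₐ[ℝ] ℝ => (ξ : A → ℝ)) '' saRealization D)) :=
      hcpt.image (continuous_apply a)
    obtain ⟨r, hr⟩ := hKa.isBounded.subset_closedBall 0
    set c' : ℝ := max r 1 with hc'def
    have hc1 : (1 : ℝ) ≤ c' := le_max_right _ _
    have hbound : ∀ ξ ∈ saRealization D, |ξ a| ≤ c' := by
      intro ξ hξ
      have hmem : ξ a ∈ (fun g : A → ℝ => g a) ''
          ((fun ξ : A →ₐ[ℝ] ℝ => (ξ : A → ℝ)) '' saRealization D) :=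
        ⟨(ξ : A → ℝ), ⟨ξ, hξ, rfl⟩, rfl⟩
      have h2 := hr hmem
      rw [Metric.mem_closedBall, Real.dist_eq, sub_zero] at h2
      exact h2.trans (le_max_left _ _)
    have hT1 : (algebraMap ℝ A c' - a) ∈ saturatedPreordering (saRealization D) := by
      intro ξ hξ
      have h1 := abs_le.mp (hbound ξ hξ)
      have h2 : ξ (algebraMap ℝ A c' - a) = c' - ξ a := by
        rw [map_sub, AlgHom.commutes]; norm_num
      rw [h2]; linarith [h1.2]
    have hT2 : (algebraMap ℝ A c' + a) ∈ saturatedPreordering (saRealization D) := by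
      intro ξ hξ
      have h1 := abs_le.mp (hbound ξ hξ)
      have h2 : ξ (algebraMap ℝ A c' + a) = c' + ξ a := by
        rw [map_add, AlgHom.commutes]; norm_num
      rw [h2]; linarith [h1.1]
    -- bound for `b`
    obtain ⟨d, hd⟩ := (mem_boundedSubalgebra_iff R (b : R)).mp b.2
    set d' : ℝ := max d 1 with hd'def
    have hd1 : (1 : ℝ) ≤ d' := le_max_right _ _
    have hbd : |(b : R)| ≤ algebraMap ℝ R d' :=
      hd.trans (algebraMap_real_mono R (le_max_left _ _))
    have hbabs := abs_le.mp hbd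
    have hcoe : ((algebraMap ℝ ↥(boundedSubalgebra R) d' : ↥(boundedSubalgebra R)) : R)
        = algebraMap ℝ R d' := rfl
    -- square roots of d' ± b in B
    have hplus : (0 : R) ≤ ((algebraMap ℝ ↥(boundedSubalgebra R) d' + b :
        ↥(boundedSubalgebra R)) : R) := by
      push_cast [hcoe]
      linarith [hbabs.1]
    have hminus : (0 : R) ≤ ((algebraMap ℝ ↥(boundedSubalgebra R) d' - b :
        ↥(boundedSubalgebra R)) : R) := by
      push_cast [hcoe]
      linarith [hbabs.2]
    obtain ⟨βp, hβp⟩ := boundedSubalgebra_exists_sqrt R _ hplus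
    obtain ⟨βm, hβm⟩ := boundedSubalgebra_exists_sqrt R _ hminus
    -- elements of the preordering
    have hP1 : PreorderingGen S ((Algebra.TensorProduct.includeLeft :
        A →ₐ[ℝ] A ⊗[ℝ] ↥(boundedSubalgebra R)) (algebraMap ℝ A c' - a)) := .of ⟨_, hT1, rfl⟩
    have hP2 : PreorderingGen S ((Algebra.TensorProduct.includeLeft :
        A →ₐ[ℝ] A ⊗[ℝ] ↥(boundedSubalgebra R)) (algebraMap ℝ A c' + a)) := .of ⟨_, hT2, rfl⟩
    have hQ1 : PreorderingGen S
        ((1 : A) ⊗ₜ[ℝ] (algebraMap ℝ ↥(boundedSubalgebra R) d' + b)) := by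
      have h : (1 : A) ⊗ₜ[ℝ] (algebraMap ℝ ↥(boundedSubalgebra R) d' + b)
          = ((1 : A) ⊗ₜ[ℝ] βp) * ((1 : A) ⊗ₜ[ℝ] βp) := by
        rw [Algebra.TensorProduct.tmul_mul_tmul, one_mul, hβp]
      rw [h]; exact .sq _
    have hQ2 : PreorderingGen S
        ((1 : A) ⊗ₜ[ℝ] (algebraMap ℝ ↥(boundedSubalgebra R) d' - b)) := by
      have h : (1 : A) ⊗ₜ[ℝ] (algebraMap ℝ ↥(boundedSubalgebra R) d' - b)
          = ((1 : A) ⊗ₜ[ℝ] βm) * ((1 : A) ⊗ₜ[ℝ] βm) := by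
        rw [Algebra.TensorProduct.tmul_mul_tmul, one_mul, hβm]
      rw [h]; exact .sq _
    have hhalf : PreorderingGen S
        (algebraMap ℝ (A ⊗[ℝ] ↥(boundedSubalgebra R)) (Real.sqrt (1/2)) *
         algebraMap ℝ (A ⊗[ℝ] ↥(boundedSubalgebra R)) (Real.sqrt (1/2))) := .sq _
    have hTot : PreorderingGen S
        ((algebraMap ℝ (A ⊗[ℝ] ↥(boundedSubalgebra R)) (Real.sqrt (1/2)) *
          algebraMap ℝ (A ⊗[ℝ] ↥(boundedSubalgebra R)) (Real.sqrt (1/2))) *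
         ((Algebra.TensorProduct.includeLeft :
            A →ₐ[ℝ] A ⊗[ℝ] ↥(boundedSubalgebra R)) (algebraMap ℝ A c' - a) *
              ((1 : A) ⊗ₜ[ℝ] (algebraMap ℝ ↥(boundedSubalgebra R) d' + b)) +
          (Algebra.TensorProduct.includeLeft :
            A →ₐ[ℝ] A ⊗[ℝ] ↥(boundedSubalgebra R)) (algebraMap ℝ A c' + a) *
              ((1 : A) ⊗ₜ[ℝ] (algebraMap ℝ ↥(boundedSubalgebra R) d' - b)))) :=
      hhalf.mul ((hP1.mul hQ1).add (hP2.mul hQ2))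
    refine ⟨c' * d', by positivity, ?_⟩
    convert hTot using 1
    -- the ring identity
    have e2 : algebraMap ℝ (A ⊗[ℝ] ↥(boundedSubalgebra R)) (Real.sqrt (1/2)) *
        algebraMap ℝ (A ⊗[ℝ] ↥(boundedSubalgebra R)) (Real.sqrt (1/2))
        = algebraMap ℝ (A ⊗[ℝ] ↥(boundedSubalgebra R)) (1/2) := by
      rw [← map_mul, Real.mul_self_sqrt (by norm_num)]
    have e3 : (Algebra.TensorProduct.includeLeft :
        A →ₐ[ℝ] A ⊗[ℝ] ↥(boundedSubalgebra R)) (algebraMap ℝ A c' - a)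
        = algebraMap ℝ (A ⊗[ℝ] ↥(boundedSubalgebra R)) c' - a ⊗ₜ[ℝ] (1 : ↥(boundedSubalgebra R)) := by
      rw [map_sub, AlgHom.commutes]; rfl
    have e4 : (Algebra.TensorProduct.includeLeft :
        A →ₐ[ℝ] A ⊗[ℝ] ↥(boundedSubalgebra R)) (algebraMap ℝ A c' + a)
        = algebraMap ℝ (A ⊗[ℝ] ↥(boundedSubalgebra R)) c' + a ⊗ₜ[ℝ] (1 : ↥(boundedSubalgebra R)) := by
      rw [map_add, AlgHom.commutes]; rfl
    have e5 : (1 : A) ⊗ₜ[ℝ] (algebraMap ℝ ↥(boundedSubalgebra R) d')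
        = algebraMap ℝ (A ⊗[ℝ] ↥(boundedSubalgebra R)) d' := by
      rw [← Algebra.TensorProduct.includeRight_apply]
      exact (Algebra.TensorProduct.includeRight :
        ↥(boundedSubalgebra R) →ₐ[ℝ] A ⊗[ℝ] ↥(boundedSubalgebra R)).commutes d'
    have e6 : (1 : A) ⊗ₜ[ℝ] (algebraMap ℝ ↥(boundedSubalgebra R) d' + b)
        = algebraMap ℝ (A ⊗[ℝ] ↥(boundedSubalgebra R)) d' + (1 : A) ⊗ₜ[ℝ] b := by
      rw [TensorProduct.tmul_add, e5]
    have e7 : (1 : A) ⊗ₜ[ℝ] (algebraMap ℝ ↥(boundedSubalgebra R) d' - b)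
        = algebraMap ℝ (A ⊗[ℝ] ↥(boundedSubalgebra R)) d' - (1 : A) ⊗ₜ[ℝ] b := by
      rw [TensorProduct.tmul_sub, e5]
    have e8 : a ⊗ₜ[ℝ] b = (a ⊗ₜ[ℝ] (1 : ↥(boundedSubalgebra R))) * ((1 : A) ⊗ₜ[ℝ] b) := by
      rw [Algebra.TensorProduct.tmul_mul_tmul, mul_one, one_mul]
    have e9 : algebraMap ℝ (A ⊗[ℝ] ↥(boundedSubalgebra R)) (c' * d')
        = algebraMap ℝ (A ⊗[ℝ] ↥(boundedSubalgebra R)) c' *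
          algebraMap ℝ (A ⊗[ℝ] ↥(boundedSubalgebra R)) d' := map_mul _ _ _
    have e10 : algebraMap ℝ (A ⊗[ℝ] ↥(boundedSubalgebra R)) (1/2 : ℝ) +
        algebraMap ℝ (A ⊗[ℝ] ↥(boundedSubalgebra R)) (1/2 : ℝ) = 1 := by
      have h12 : (1/2 : ℝ) + 1/2 = 1 := by norm_num
      rw [← map_add, h12, map_one]
    rw [e2, e3, e4, e6, e7, e8, e9]
    set X := a ⊗ₜ[ℝ] (1 : ↥(boundedSubalgebra R))
    set Y := (1 : A) ⊗ₜ[ℝ] b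
    set C := algebraMap ℝ (A ⊗[ℝ] ↥(boundedSubalgebra R)) c'
    set Dv := algebraMap ℝ (A ⊗[ℝ] ↥(boundedSubalgebra R)) d'
    linear_combination (X * Y - C * Dv) * e10
end
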